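/- arXiv:2102.04909 — 11 statements merged into one kernel-verified Lean document; each statement's English description precedes it below -/
import Mathlib

section
/- For every allocation instance with n agents and additive valuations, and every agent i, the three shares satisfy the chain of inequalities PS_i ≥ TPS_i ≥ MMS_i ≥ (n/(2n−1))·TPS_i. -/
open Finset

/-- The value of a bundle `S` under an additive valuation with item values `v`. -/
def val {ι : Type*} (v : ι → ℝ) (S : Finset ι) : ℝ := ∑ j ∈ S, v j

/-- `A` is an allocation: the bundles are pairwise disjoint and cover all items. -/
def isAlloc {ι : Type*} [Fintype ι] [DecidableEq ι] {n : ℕ} (A : Fin n → Finset ι) : Prop :=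
  (∀ i j : Fin n, i ≠ j → Disjoint (A i) (A j)) ∧ Finset.univ.biUnion A = Finset.univ

/-- `t` is the truncated proportional share `TPS(k, S, v)`: the largest `t ≥ 0`
with `(1/k) · Σ_{j ∈ S} min(v j, t) = t`. -/
def isTPS {ι : Type*} (k : ℕ) (S : Finset ι) (v : ι → ℝ) (t : ℝ) : Prop :=
  IsGreatest {t' : ℝ | 0 ≤ t' ∧ (∑ j ∈ S, min (v j) t') / k = t'} t

/-- `μ` is the maximin share of an agent with valuation `v` among `n` agents:
the maximum over partitions into `n` bundles of the minimum bundle value. -/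
def isMMS {ι : Type*} [Fintype ι] [DecidableEq ι] (n : ℕ) (v : ι → ℝ) (μ : ℝ) : Prop :=
  IsGreatest {x : ℝ | ∃ P : Fin n → Finset ι, isAlloc P ∧ x = ⨅ i : Fin n, val v (P i)} μ


lemma bundle_min {ι : Type*} (B : Finset ι) (u : ι → ℝ) (hu : ∀ j ∈ B, 0 ≤ u j)
    (μ : ℝ) (hμ : 0 ≤ μ) (hB : μ ≤ ∑ j ∈ B, u j) : μ ≤ ∑ j ∈ B, min (u j) μ := by
  by_cases hbig : ∃ j ∈ B, μ ≤ u j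
  · obtain ⟨j, hj, hju⟩ := hbig
    calc μ = min (u j) μ := (min_eq_right hju).symm
      _ ≤ ∑ j ∈ B, min (u j) μ :=
        Finset.single_le_sum (fun j hj => le_min (hu j hj) hμ) hj
  · push_neg at hbig
    have h : ∀ j ∈ B, min (u j) μ = u j := fun j hj => min_eq_left (hbig j hj).le
    rw [Finset.sum_congr rfl h]; exact hB

lemma bag {ι : Type*} [DecidableEq ι] (w : ι → ℝ) (c : ℝ) (hc : 0 < c) :
    ∀ (k : ℕ) (S : Finset ι), (∀ j ∈ S, 0 ≤ w j ∧ w j ≤ 2*c) →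
    (2*(k:ℝ) - 1)*c ≤ ∑ j ∈ S, w j →
    ∃ P : Fin k → Finset ι, (∀ a b : Fin k, a ≠ b → Disjoint (P a) (P b)) ∧
      (∀ a, P a ⊆ S) ∧ (∀ a, c ≤ ∑ j ∈ P a, w j) := by
  intro k
  induction k with
  | zero =>
    intro S _ _
    exact ⟨fun a => a.elim0, fun a => a.elim0, fun a => a.elim0, fun a => a.elim0⟩
  | succ k ih =>
    intro S hS hsum
    have hk0 : (0:ℝ) ≤ (k:ℝ) := Nat.cast_nonneg k
    have hcS : c ≤ ∑ j ∈ S, w j := by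
      push_cast at hsum
      nlinarith
    have hTex : ∃ T ⊆ S, c ≤ ∑ j ∈ T, w j ∧ ∑ j ∈ T, w j ≤ 2*c := by
      by_cases hbig : ∃ j ∈ S, c ≤ w j
      · obtain ⟨j, hj, hcj⟩ := hbig
        refine ⟨{j}, by simpa using hj, by simpa using hcj, by simpa using (hS j hj).2⟩
      · push_neg at hbig
        have hF : ((S.powerset.filter (fun T => c ≤ ∑ j ∈ T, w j))).Nonempty :=
          ⟨S, by simp [Finset.mem_filter, hcS]⟩
        obtain ⟨T, hTF, hTmin⟩ := Finset.exists_min_image _ (fun T => T.card) hF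
        rw [Finset.mem_filter, Finset.mem_powerset] at hTF
        obtain ⟨hTS, hTc⟩ := hTF
        have hTne : T.Nonempty := by
          rcases T.eq_empty_or_nonempty with h | h
          · exfalso; rw [h] at hTc; simp at hTc; linarith
          · exact h
        obtain ⟨j, hjT⟩ := hTne
        have herase : ¬ (c ≤ ∑ x ∈ T.erase j, w x) := by
          intro hcon
          have hmem : T.erase j ∈ S.powerset.filter (fun T => c ≤ ∑ j ∈ T, w j) := by
            rw [Finset.mem_filter, Finset.mem_powerset]
            exact ⟨(Finset.erase_subset _ _).trans hTS, hcon⟩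
          have := hTmin _ hmem
          have hlt : (T.erase j).card < T.card := Finset.card_erase_lt_of_mem hjT
          omega
        push_neg at herase
        have hsplit : ∑ x ∈ T.erase j, w x + w j = ∑ x ∈ T, w x :=
          Finset.sum_erase_add _ _ hjT
        have hwj : w j < c := hbig j (hTS hjT)
        exact ⟨T, hTS, hTc, by linarith⟩
    obtain ⟨T, hTS, hTc, hT2c⟩ := hTex
    have hrest : (2*(k:ℝ) - 1)*c ≤ ∑ j ∈ S \ T, w j := by
      have hsd : ∑ j ∈ S \ T, w j + ∑ j ∈ T, w j = ∑ j ∈ S, w j :=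
        Finset.sum_sdiff hTS
      push_cast at hsum
      nlinarith
    obtain ⟨Q, hQd, hQs, hQc⟩ := ih (S \ T)
      (fun j hj => hS j (Finset.sdiff_subset hj)) hrest
    refine ⟨Fin.cons T Q, ?_, ?_, ?_⟩
    · intro a b hab
      induction a using Fin.cases with
      | zero =>
        induction b using Fin.cases with
        | zero => exact absurd rfl hab
        | succ b' =>
          simp only [Fin.cons_zero, Fin.cons_succ]
          exact (Finset.sdiff_disjoint.mono_left (hQs b')).symm
      | succ a' =>
        induction b using Fin.cases with
        | zero =>
          simp only [Fin.cons_zero, Fin.cons_succ]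
          exact Finset.sdiff_disjoint.mono_left (hQs a')
        | succ b' =>
          simp only [Fin.cons_succ]
          exact hQd a' b' (fun h => hab (congrArg Fin.succ h))
    · refine Fin.cases ?_ ?_
      · simpa using hTS
      · intro a'; simpa using (hQs a').trans Finset.sdiff_subset
    · refine Fin.cases ?_ ?_
      · simpa using hTc
      · intro a'; simpa using hQc a'

/-- `PS_i ≥ TPS_i ≥ MMS_i ≥ (n/(2n−1))·TPS_i`. -/
theorem stmt0 {ι : Type*} [Fintype ι] [DecidableEq ι] (n : ℕ) (hn : 1 ≤ n)
    (v : Fin n → ι → ℝ) (hv : ∀ i j, 0 ≤ v i j) (i : Fin n)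
    (tps mms : ℝ) (htps : isTPS n Finset.univ (v i) tps) (hmms : isMMS n (v i) mms) :
    val (v i) Finset.univ / n ≥ tps ∧ tps ≥ mms ∧
      mms ≥ ((n : ℝ) / (2 * (n : ℝ) - 1)) * tps := by
  have hnpos : (0:ℝ) < n := by exact_mod_cast hn
  haveI : Nonempty (Fin n) := ⟨⟨0, hn⟩⟩
  set u : ι → ℝ := v i with hu
  have hu0 : ∀ j, 0 ≤ u j := hv i
  obtain ⟨⟨htps0, htpseq⟩, htpsub⟩ := htps
  have htpssum : ∑ j, min (u j) tps = n * tps := by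
    field_simp at htpseq; linarith [htpseq]
  -- Part 1
  have hn1 : (1:ℝ) ≤ (n:ℝ) := by exact_mod_cast hn
  have part1 : val u Finset.univ / n ≥ tps := by
    rw [ge_iff_le, ← htpseq]
    show (∑ j : ι, min (u j) tps) / (n:ℝ) ≤ (∑ j : ι, u j) / (n:ℝ)
    gcongr with j
    exact min_le_left _ _
  -- mms ≥ 0 and bundle facts from the mms witness
  obtain ⟨⟨P, ⟨hPd, hPu⟩, hmval⟩, hmub⟩ := hmms
  have hbund : ∀ a : Fin n, mms ≤ val u (P a) := by
    intro a
    rw [hmval]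
    exact ciInf_le (Set.Finite.bddBelow (Set.finite_range _)) a
  have hmms0 : 0 ≤ mms := by
    rw [hmval]
    exact le_ciInf (fun a => Finset.sum_nonneg (fun j _ => hu0 j))
  -- Part 2 : key inequality n*mms ≤ ∑ min (u j) mms
  have hsum_split : ∀ x : ℝ, ∑ j, min (u j) x = ∑ a : Fin n, ∑ j ∈ P a, min (u j) x := by
    intro x
    rw [← hPu, Finset.sum_biUnion]
    exact fun a _ b _ hab => hPd a b hab
  have key : (n:ℝ) * mms ≤ ∑ j, min (u j) mms := by
    rw [hsum_split]
    calc (n:ℝ) * mms = ∑ _a : Fin n, mms := by simp [mul_comm]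
      _ ≤ _ := Finset.sum_le_sum (fun a _ => by
          exact bundle_min (P a) u (fun j _ => hu0 j) mms hmms0 (hbund a))
  have part2 : tps ≥ mms := by
    set V := ∑ j, u j with hV
    have hV0 : 0 ≤ V := Finset.sum_nonneg (fun j _ => hu0 j)
    have hcont : ContinuousOn (fun x : ℝ => (∑ j, min (u j) x) / n) (Set.Icc mms (mms + V)) := by
      apply Continuous.continuousOn
      exact (continuous_finset_sum _ (fun j _ => (continuous_const.min continuous_id))).div_const _
    have hivt := intermediate_value_Icc' (by linarith : mms ≤ mms + V) hcont
    have hcont2 : ContinuousOn (fun x : ℝ => (∑ j, min (u j) x) / n - x) (Set.Icc mms (mms + V)) :=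
      hcont.sub continuousOn_id
    have hivt2 := intermediate_value_Icc' (by linarith : mms ≤ mms + V) hcont2
    have h0mem : (0:ℝ) ∈ Set.Icc ((∑ j, min (u j) (mms + V)) / n - (mms + V))
        ((∑ j, min (u j) mms) / n - mms) := by
      constructor
      · have h1 : ∑ j, min (u j) (mms + V) ≤ V := Finset.sum_le_sum (fun j _ => min_le_left _ _)
        have h2 : (∑ j, min (u j) (mms + V)) / n ≤ V / n := by gcongr
        have h3 : V / n ≤ V := by
          rw [div_le_iff₀ hnpos]
          nlinarith [hV0, hnpos, (by exact_mod_cast hn : (1:ℝ) ≤ n)]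
        linarith
      · have : mms ≤ (∑ j, min (u j) mms) / n := by
          rw [le_div_iff₀ hnpos]; linarith [key]
        linarith
    obtain ⟨x, hxmem, hxeq⟩ := hivt2 h0mem
    have hgx : (∑ j, min (u j) x) / n = x := by
      simpa [sub_eq_zero] using hxeq
    have hx0 : 0 ≤ x := le_trans hmms0 hxmem.1
    have := htpsub ⟨hx0, hgx⟩
    linarith [hxmem.1]
  refine ⟨part1, part2, ?_⟩
  -- Part 3
  rcases eq_or_lt_of_le htps0 with h0 | htpspos
  · rw [← h0, mul_zero]; exact hmms0
  · set c : ℝ := ((n:ℝ) / (2 * (n:ℝ) - 1)) * tps with hc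
    have hden : (0:ℝ) < 2 * (n:ℝ) - 1 := by linarith [hn1]
    have hcpos : 0 < c := by positivity
    have htps2c : tps ≤ 2 * c := by
      rw [hc]
      rw [div_mul_eq_mul_div, ← mul_div_assoc, le_div_iff₀ hden]
      nlinarith
    set w : ι → ℝ := fun j => min (u j) tps with hw
    have hwcond : ∀ j ∈ (Finset.univ : Finset ι), 0 ≤ w j ∧ w j ≤ 2 * c := by
      intro j _
      exact ⟨le_min (hu0 j) htps0, le_trans (min_le_right _ _) htps2c⟩
    have hwsum : (2*(n:ℝ) - 1) * c ≤ ∑ j, w j := by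
      have hcc : (2*(n:ℝ) - 1) * c = (n:ℝ) * tps := by
        rw [hc]; field_simp
      show (2*(n:ℝ) - 1) * c ≤ ∑ j, min (u j) tps
      exact le_of_eq (hcc.trans htpssum.symm)
    obtain ⟨P', hP'd, hP's, hP'c⟩ := bag w c hcpos n Finset.univ hwcond hwsum
    -- build a full allocation: dump leftovers into bundle ⟨0, hn⟩
    set i0 : Fin n := ⟨0, hn⟩ with hi0
    set L : Finset ι := Finset.univ \ Finset.univ.biUnion P' with hL
    set Q : Fin n → Finset ι := fun a => if a = i0 then P' a ∪ L else P' a with hQ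
    have hLd : ∀ a, Disjoint L (P' a) := by
      intro a
      exact Finset.sdiff_disjoint.mono_right (Finset.subset_biUnion_of_mem P' (Finset.mem_univ a))
    have hQalloc : isAlloc Q := by
      constructor
      · intro a b hab
        have hd := hP'd a b hab
        by_cases ha : a = i0
        · have hb : b ≠ i0 := fun h => hab (ha.trans h.symm)
          simp only [hQ, if_pos ha, if_neg hb]
          exact Finset.disjoint_union_left.mpr ⟨hd, hLd b⟩
        · by_cases hb : b = i0
          · simp only [hQ, if_neg ha, if_pos hb]
            exact Finset.disjoint_union_right.mpr ⟨hd, (hLd a).symm⟩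
          · simp only [hQ, if_neg ha, if_neg hb]
            exact hd
      · apply Finset.eq_univ_of_forall
        intro j
        rw [Finset.mem_biUnion]
        by_cases hj : j ∈ Finset.univ.biUnion P'
        · rw [Finset.mem_biUnion] at hj
          obtain ⟨a, _, hja⟩ := hj
          refine ⟨a, Finset.mem_univ a, ?_⟩
          by_cases ha : a = i0
          · simp only [hQ, if_pos ha]; exact Finset.mem_union_left _ hja
          · simp only [hQ, if_neg ha]; exact hja
        · refine ⟨i0, Finset.mem_univ i0, ?_⟩
          simp only [hQ, if_pos rfl]
          exact Finset.mem_union_right _ (by rw [hL, Finset.mem_sdiff]; exact ⟨Finset.mem_univ j, hj⟩)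
    have hQval : ∀ a, c ≤ val u (Q a) := by
      intro a
      have hsub : P' a ⊆ Q a := by
        by_cases ha : a = i0
        · simp only [hQ, if_pos ha]; exact Finset.subset_union_left
        · simp only [hQ, if_neg ha]; exact subset_rfl
      calc c ≤ ∑ j ∈ P' a, w j := hP'c a
        _ ≤ ∑ j ∈ P' a, u j := Finset.sum_le_sum (fun j _ => min_le_left _ _)
        _ ≤ ∑ j ∈ Q a, u j := Finset.sum_le_sum_of_subset_of_nonneg hsub (fun j _ _ => hu0 j)
        _ = val u (Q a) := rfl
    have hxin : (⨅ a : Fin n, val u (Q a)) ∈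
        {x : ℝ | ∃ P : Fin n → Finset ι, isAlloc P ∧ x = ⨅ a : Fin n, val u (P a)} :=
      ⟨Q, hQalloc, rfl⟩
    have h1 := hmub hxin
    have h2 : c ≤ ⨅ a : Fin n, val u (Q a) := le_ciInf hQval
    exact le_trans h2 h1
end

section
/- Let v be an additive valuation over a nonempty finite set M of items and let n ≥ 2. If j is an item of maximum value under v among the items of M, then TPS(n, M, v) = min( v(M)/n , TPS(n−1, M∖{j}, v) ). -/
open Finset

/-- if `j` has maximum value among items of a nonempty `M` and `n ≥ 2`,
then `TPS(n, M, v) = min(v(M)/n, TPS(n−1, M∖{j}, v))`. -/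
theorem stmt1 {ι : Type*} [DecidableEq ι] (M : Finset ι) (hM : M.Nonempty)
    (v : ι → ℝ) (hv : ∀ j, 0 ≤ v j) (n : ℕ) (hn : 2 ≤ n)
    (j : ι) (hjM : j ∈ M) (hjmax : ∀ j' ∈ M, v j' ≤ v j)
    (t₁ t₂ : ℝ) (h₁ : isTPS n M v t₁) (h₂ : isTPS (n - 1) (M.erase j) v t₂) :
    t₁ = min (val v M / n) t₂ := by
  obtain ⟨⟨ht₁0, ht₁⟩, ht₁max⟩ := h₁
  obtain ⟨⟨ht₂0, ht₂⟩, ht₂max⟩ := h₂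
  simp only [Set.mem_setOf_eq, upperBounds, Set.mem_setOf_eq] at ht₁ ht₂ ht₁max ht₂max
  set S : ℝ := val v M with hSdef
  have hn0 : (0:ℝ) < n := by positivity
  have hn1 : (0:ℝ) < (n:ℝ) - 1 := by
    have : (2:ℝ) ≤ n := by exact_mod_cast hn
    linarith
  have hcast : ((n-1:ℕ):ℝ) = (n:ℝ) - 1 := by
    have h1 : 1 ≤ n := by omega
    push_cast [h1]; ring
  -- split of sums over M
  have hsplit : ∀ t : ℝ, ∑ i ∈ M, min (v i) t = min (v j) t + ∑ i ∈ M.erase j, min (v i) t :=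
    fun t => (Finset.add_sum_erase M _ hjM).symm
  have hvsplit : S = v j + ∑ i ∈ M.erase j, v i := (Finset.add_sum_erase M v hjM).symm
  have hS1 : ∑ i ∈ M, min (v i) t₁ = n * t₁ := by
    rw [div_eq_iff (ne_of_gt hn0)] at ht₁; linarith
  have hS2 : ∑ i ∈ M.erase j, min (v i) t₂ = ((n:ℝ) - 1) * t₂ := by
    rw [hcast, div_eq_iff (ne_of_gt hn1)] at ht₂; linarith
  have hsumle : ∀ t : ℝ, ∑ i ∈ M, min (v i) t ≤ S :=
    fun t => Finset.sum_le_sum (fun i _ => min_le_left _ _)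
  have hsumle' : ∀ t : ℝ, ∑ i ∈ M.erase j, min (v i) t ≤ S - v j := by
    intro t
    have := Finset.sum_le_sum (s := M.erase j) (fun i _ => min_le_left (v i) t)
    linarith [hvsplit, this]
  have hS0 : 0 ≤ S := Finset.sum_nonneg (fun i _ => hv i)
  have hvjS : v j ≤ S := by
    have : 0 ≤ ∑ i ∈ M.erase j, v i := Finset.sum_nonneg (fun i _ => hv i)
    linarith
  -- t₁ ≤ S / n
  have ht1A : t₁ ≤ S / n := by
    rw [le_div_iff₀ hn0]
    calc t₁ * n = n * t₁ := by ring
    _ = ∑ i ∈ M, min (v i) t₁ := hS1.symm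
    _ ≤ S := hsumle t₁
  -- t₁ ≤ t₂
  have ht1t2 : t₁ ≤ t₂ := by
    by_cases h : t₁ ≤ v j
    · -- t₁ is a fixed point of the erase problem
      apply ht₂max
      constructor
      · exact ht₁0
      · have hmj : min (v j) t₁ = t₁ := min_eq_right h
        have : ∑ i ∈ M.erase j, min (v i) t₁ = ((n:ℝ) - 1) * t₁ := by
          have := hsplit t₁
          rw [hmj, hS1] at this
          linarith
        rw [this, hcast]
        field_simp
    · push_neg at h
      -- all items ≤ v j < t₁, so sum = S and t₁ = S/n
      have hall : ∀ i ∈ M, min (v i) t₁ = v i := fun i hi =>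
        min_eq_left (le_of_lt (lt_of_le_of_lt (hjmax i hi) h))
      have hSeq : S = n * t₁ := by
        rw [← hS1]; exact Finset.sum_congr rfl (fun i hi => (hall i hi).symm)
      set t' : ℝ := (S - v j) / ((n:ℝ) - 1) with ht'def
      have ht'gt : t₁ < t' := by
        rw [ht'def, lt_div_iff₀ hn1]
        nlinarith
      have ht'mem : t' ∈ {t'' : ℝ | 0 ≤ t'' ∧ (∑ i ∈ M.erase j, min (v i) t'') / ((n-1:ℕ):ℝ) = t''} := by
        constructor
        · exact le_trans ht₁0 (le_of_lt ht'gt)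
        · have hall' : ∀ i ∈ M.erase j, min (v i) t' = v i := fun i hi =>
            min_eq_left (le_of_lt (lt_of_le_of_lt (hjmax i (Finset.mem_of_mem_erase hi))
              (lt_trans h ht'gt)))
          have : ∑ i ∈ M.erase j, min (v i) t' = S - v j :=
            (Finset.sum_congr rfl hall').trans (by linarith)
          rw [this, hcast, ht'def]
      have := ht₂max ht'mem
      linarith
  -- min (S/n) t₂ ≤ t₁
  have hminle : min (S / n) t₂ ≤ t₁ := by
    by_cases hm : t₂ ≤ S / n
    · -- then t₂ ≤ v j and t₂ is a fixed point of the full problem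
      have ht2vj : t₂ ≤ v j := by
        by_contra hc
        push_neg at hc
        have hall' : ∀ i ∈ M.erase j, min (v i) t₂ = v i := fun i hi =>
          min_eq_left (le_of_lt (lt_of_le_of_lt (hjmax i (Finset.mem_of_mem_erase hi)) hc))
        have hsum : ∑ i ∈ M.erase j, min (v i) t₂ = S - v j :=
          (Finset.sum_congr rfl hall').trans (by linarith)
        rw [hsum] at hS2
        -- S - v j = (n-1) t₂, t₂ ≤ S/n, v j < t₂
        have h1 : t₂ * n ≤ S := by
          rw [le_div_iff₀ hn0] at hm; linarith
        nlinarith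
      have : t₂ ≤ t₁ := by
        apply ht₁max
        refine ⟨ht₂0, ?_⟩
        have : ∑ i ∈ M, min (v i) t₂ = n * t₂ := by
          rw [hsplit t₂, min_eq_right ht2vj, hS2]; ring
        rw [this]; field_simp
      exact le_trans (min_le_right _ _) this
    · push_neg at hm
      -- S/n < t₂ ; then v j ≤ S/n and S/n is a fixed point of the full problem
      have hvjA : v j ≤ S / n := by
        by_contra hc
        push_neg at hc
        -- t₂ ≤ (S - v j)/(n-1) < S/n, contradiction with S/n < t₂
        have h1 : ((n:ℝ) - 1) * t₂ ≤ S - v j := by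
          rw [← hS2]; exact hsumle' t₂
        rw [div_lt_iff₀ hn0] at hc
        have hm' : S < t₂ * n := by
          rw [div_lt_iff₀ hn0] at hm; linarith
        have hvjt : v j < t₂ := by linarith
        have := mul_lt_mul_of_pos_left hvjt hn1
        nlinarith
      have hA0 : 0 ≤ S / n := div_nonneg hS0 (le_of_lt hn0)
      have : S / n ≤ t₁ := by
        apply ht₁max
        refine ⟨hA0, ?_⟩
        have hall : ∀ i ∈ M, min (v i) (S / n) = v i := fun i hi =>
          min_eq_left (le_trans (hjmax i hi) hvjA)
        have : ∑ i ∈ M, min (v i) (S / n) = S := Finset.sum_congr rfl hall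
        rw [this]
      exact le_trans (min_le_left _ _) this
  exact le_antisymm (le_min ht1A ht1t2) hminle
end

section
/- Let v be an additive valuation over a finite set M of items and let n ≥ 2. Then for every single item e ∈ M, TPS(n−1, M∖{e}, v) ≥ TPS(n, M, v). -/
open Finset

/-- for `n ≥ 2` and any item `e ∈ M`,
`TPS(n−1, M∖{e}, v) ≥ TPS(n, M, v)`. -/
theorem stmt2 {ι : Type*} [DecidableEq ι] (M : Finset ι)
    (v : ι → ℝ) (hv : ∀ j, 0 ≤ v j) (n : ℕ) (hn : 2 ≤ n)
    (e : ι) (he : e ∈ M)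
    (t₁ t₂ : ℝ) (h₁ : isTPS n M v t₁) (h₂ : isTPS (n - 1) (M.erase e) v t₂) :
    t₂ ≥ t₁ := by
  obtain ⟨⟨ht₁0, ht₁⟩, -⟩ := h₁
  set k := n - 1 with hk
  have hkpos : (0:ℝ) < (k : ℝ) := by
    have : 1 ≤ k := by omega
    exact_mod_cast Nat.lt_of_lt_of_le Nat.zero_lt_one this
  have hkn : (k : ℝ) = (n : ℝ) - 1 := by
    have : (k : ℕ) = n - 1 := hk
    push_cast [hk, Nat.cast_sub (by omega : 1 ≤ n)]
    ring
  set f : ℝ → ℝ := fun t => (∑ j ∈ M.erase e, min (v j) t) / k with hf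
  have hcont : Continuous f := by
    apply Continuous.div_const
    exact continuous_finset_sum _ fun j _ => Continuous.min continuous_const continuous_id
  -- f t₁ ≥ t₁
  have hsum : ∑ j ∈ M.erase e, min (v j) t₁ = (n : ℝ) * t₁ - min (v e) t₁ := by
    have := Finset.sum_erase_add M (fun j => min (v j) t₁) he
    have hnt : ∑ j ∈ M, min (v j) t₁ = (n : ℝ) * t₁ := by
      have hn0 : (n : ℝ) ≠ 0 := by positivity
      field_simp at ht₁
      linarith [ht₁]
    linarith [this, hnt]
  have hft₁ : t₁ ≤ f t₁ := by
    have hmin : min (v e) t₁ ≤ t₁ := min_le_right _ _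
    have : (k : ℝ) * t₁ ≤ ∑ j ∈ M.erase e, min (v j) t₁ := by
      rw [hsum, hkn]; nlinarith
    rw [hf]
    exact (le_div_iff₀ hkpos).mpr (by linarith [this])
  -- bound B
  set B : ℝ := max t₁ ((∑ j ∈ M.erase e, v j) / k) with hB
  have ht₁B : t₁ ≤ B := le_max_left _ _
  have hfB : f B ≤ B := by
    have : f B ≤ (∑ j ∈ M.erase e, v j) / k := by
      have hle : ∑ j ∈ M.erase e, min (v j) B ≤ ∑ j ∈ M.erase e, v j :=
        Finset.sum_le_sum fun j _ => min_le_left _ _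
      exact div_le_div_of_nonneg_right hle hkpos.le |>.trans_eq rfl
    exact this.trans (le_max_right _ _)
  -- IVT: exists s ∈ [t₁, B] with f s = s
  have hIVT : ∃ s ∈ Set.Icc t₁ B, f s - s = 0 := by
    have hcont' : ContinuousOn (fun t => f t - t) (Set.Icc t₁ B) :=
      (hcont.sub continuous_id).continuousOn
    have h0 : (0:ℝ) ∈ Set.Icc (f B - B) (f t₁ - t₁) := ⟨by linarith, by linarith⟩
    have := intermediate_value_Icc' ht₁B hcont' h0
    obtain ⟨s, hs, hfs⟩ := this
    exact ⟨s, hs, hfs⟩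
  obtain ⟨s, ⟨hst₁, -⟩, hfs⟩ := hIVT
  have hs0 : 0 ≤ s := le_trans ht₁0 hst₁
  have hfss : f s = s := by linarith
  have hmem : s ∈ {t' : ℝ | 0 ≤ t' ∧ (∑ j ∈ M.erase e, min (v j) t') / (k : ℝ) = t'} := by
    refine ⟨hs0, ?_⟩
    simpa [hf] using hfss
  exact le_trans hst₁ (h₂.2 hmem)
end

section
/- In every allocation instance with n agents and additive valuations, every half-fair allocation A = (A_1,…,A_n) gives every agent i value v_i(A_i) at least (n/(2n−1))·TPS_i, i.e., at least an n/(2n−1) fraction of her truncated proportional share. -/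
open Finset

/-- An allocation is half-fair if whenever a bundle `A j` has more than one item,
every agent `i` values her own bundle at least half as much as `A j`. -/
def halfFair {ι : Type*} [Fintype ι] {n : ℕ} (v : Fin n → ι → ℝ)
    (A : Fin n → Finset ι) : Prop :=
  ∀ i j : Fin n, 1 < (A j).card → val (v i) (A i) ≥ (1 / 2) * val (v i) (A j)

/-- every half-fair allocation gives every agent at least an
`n/(2n−1)` fraction of her truncated proportional share. -/
theorem stmt3 {ι : Type*} [Fintype ι] [DecidableEq ι] (n : ℕ) (hn : 1 ≤ n)
    (v : Fin n → ι → ℝ) (hv : ∀ i j, 0 ≤ v i j)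
    (A : Fin n → Finset ι) (hA : isAlloc A) (hhf : halfFair v A)
    (i : Fin n) (tps : ℝ) (htps : isTPS n Finset.univ (v i) tps) :
    val (v i) (A i) ≥ ((n : ℝ) / (2 * (n : ℝ) - 1)) * tps := by
  obtain ⟨hdisj, hcover⟩ := hA
  obtain ⟨⟨ht0, hteq⟩, -⟩ := htps
  have hn0 : (0:ℝ) < n := by exact_mod_cast Nat.pos_of_ne_zero (by omega)
  have hn1 : (1:ℝ) ≤ n := by exact_mod_cast hn
  set w : ι → ℝ := fun j => min (v i j) tps with hw
  set x := val (v i) (A i) with hxdef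
  have hx0 : 0 ≤ x := Finset.sum_nonneg fun j _ => hv i j
  have hsum : ∑ j, w j = n * tps := by
    field_simp at hteq
    linarith [hteq]
  have hpart : ∑ j, w j = ∑ k : Fin n, ∑ j ∈ A k, w j := by
    rw [← hcover, Finset.sum_biUnion]
    intro a _ b _ hab
    exact hdisj a b hab
  have hwle : ∀ j, w j ≤ v i j := fun j => min_le_left _ _
  have hwt : ∀ j, w j ≤ tps := fun j => min_le_right _ _
  have hbound : ∀ k : Fin n, ∑ j ∈ A k, w j ≤ max tps (2 * x) := by
    intro k
    by_cases hc : 1 < (A k).card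
    · calc ∑ j ∈ A k, w j ≤ ∑ j ∈ A k, v i j := Finset.sum_le_sum fun j _ => hwle j
        _ ≤ 2 * x := by
            have h2 := hhf i k hc
            simp only [_root_.val] at h2 hxdef
            rw [hxdef]
            linarith
        _ ≤ max tps (2*x) := le_max_right _ _
    · push_neg at hc
      calc ∑ j ∈ A k, w j ≤ (A k).card • tps :=
            Finset.sum_le_card_nsmul _ _ _ (fun j _ => hwt j)
        _ ≤ tps := by
            rw [nsmul_eq_mul]
            have : ((A k).card : ℝ) ≤ 1 := by exact_mod_cast hc
            nlinarith
        _ ≤ max tps (2*x) := le_max_left _ _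
  have hbi : ∑ j ∈ A i, w j ≤ x := Finset.sum_le_sum fun j _ => hwle j
  have hsplit : ∑ k : Fin n, ∑ j ∈ A k, w j
      = (∑ j ∈ A i, w j) + ∑ k ∈ Finset.univ.erase i, ∑ j ∈ A k, w j := by
    rw [← Finset.add_sum_erase _ _ (Finset.mem_univ i)]
  have hrest : ∑ k ∈ Finset.univ.erase i, ∑ j ∈ A k, w j
      ≤ ((n:ℝ) - 1) * max tps (2*x) := by
    calc ∑ k ∈ Finset.univ.erase i, ∑ j ∈ A k, w j
        ≤ (Finset.univ.erase i).card • max tps (2*x) :=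
          Finset.sum_le_card_nsmul _ _ _ (fun k _ => hbound k)
      _ = ((n:ℝ) - 1) * max tps (2*x) := by
          rw [Finset.card_erase_of_mem (Finset.mem_univ i), nsmul_eq_mul]
          simp only [Finset.card_univ, Fintype.card_fin]
          congr 1
          have : (1:ℕ) ≤ n := hn
          push_cast [Nat.cast_sub this]
          ring
  have key : (n:ℝ) * tps ≤ x + ((n:ℝ) - 1) * max tps (2*x) := by
    rw [← hsum, hpart, hsplit]
    linarith
  have h2n : (0:ℝ) < 2*(n:ℝ) - 1 := by linarith
  rcases le_total tps (2*x) with h | h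
  · rw [max_eq_right h] at key
    rw [ge_iff_le, div_mul_eq_mul_div, div_le_iff₀ h2n]
    nlinarith
  · rw [max_eq_left h] at key
    have hle : tps ≤ x := by nlinarith
    have hx : x = 0 := le_antisymm (by linarith) hx0
    have ht : tps = 0 := le_antisymm (by linarith) ht0
    rw [hx, ht, mul_zero]
end

section
/- In every allocation instance with n agents and additive valuations, every EFX allocation A = (A_1,…,A_n) gives every agent i value v_i(A_i) at least (n/(2n−1))·TPS_i, i.e., at least an n/(2n−1) fraction of her truncated proportional share. -/
open Finset

/-- An allocation is EFX (envy-free up to any good) if for all agents `i, j`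
and every item `g ∈ A j`, `v_i(A_i) ≥ v_i(A_j ∖ {g})`. -/
def isEFX {ι : Type*} [Fintype ι] [DecidableEq ι] {n : ℕ} (v : Fin n → ι → ℝ)
    (A : Fin n → Finset ι) : Prop :=
  ∀ i j : Fin n, ∀ g ∈ A j, val (v i) (A i) ≥ val (v i) ((A j).erase g)

/-- every EFX allocation gives every agent at least an
`n/(2n−1)` fraction of her truncated proportional share. -/
theorem stmt4 {ι : Type*} [Fintype ι] [DecidableEq ι] (n : ℕ) (hn : 1 ≤ n)
    (v : Fin n → ι → ℝ) (hv : ∀ i j, 0 ≤ v i j)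
    (A : Fin n → Finset ι) (hA : isAlloc A) (hEFX : isEFX v A)
    (i : Fin n) (tps : ℝ) (htps : isTPS n Finset.univ (v i) tps) :
    val (v i) (A i) ≥ ((n : ℝ) / (2 * (n : ℝ) - 1)) * tps := by
  classical
  obtain ⟨hdisj, hcover⟩ := hA
  obtain ⟨⟨ht0, hteq⟩, -⟩ := htps
  have hn0 : (0:ℝ) < n := by exact_mod_cast Nat.lt_of_lt_of_le Nat.zero_lt_one hn
  set x := val (v i) (A i) with hxdef
  have hx0 : 0 ≤ x := Finset.sum_nonneg fun j _ => hv i j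
  set f : ι → ℝ := fun g => min (v i g) tps with hf
  have hsumM : ∑ g, f g = (n:ℝ) * tps := by
    rw [div_eq_iff (ne_of_gt hn0)] at hteq
    rw [hteq]; ring
  have hsplit : ∑ g, f g = ∑ j, ∑ g ∈ A j, f g := by
    rw [← hcover, Finset.sum_biUnion]
    intro a _ b _ hab
    exact hdisj a b hab
  have hci : ∑ g ∈ A i, f g ≤ x := by
    apply Finset.sum_le_sum fun g _ => min_le_left _ _
  have hsmall : ∀ j, (A j).card ≤ 1 → ∑ g ∈ A j, f g ≤ tps := by
    intro j hc
    calc ∑ g ∈ A j, f g ≤ ∑ _g ∈ A j, tps :=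
          Finset.sum_le_sum fun g _ => min_le_right _ _
      _ = ((A j).card : ℝ) * tps := by rw [Finset.sum_const, nsmul_eq_mul]
      _ ≤ 1 * tps := by
          apply mul_le_mul_of_nonneg_right _ ht0
          exact_mod_cast hc
      _ = tps := one_mul _
  have hbig : ∀ j, 2 ≤ (A j).card → ∑ g ∈ A j, f g ≤ 2 * x := by
    intro j hc
    obtain ⟨g, hg, hmin⟩ := Finset.exists_min_image (A j) (v i)
      (Finset.card_pos.mp (by omega))
    have herase : val (v i) ((A j).erase g) ≤ x := hEFX i j g hg
    have hne : ((A j).erase g).Nonempty := by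
      rw [← Finset.card_pos, Finset.card_erase_of_mem hg]; omega
    obtain ⟨h, hh⟩ := hne
    have hvg : v i g ≤ x := by
      have h1 : v i g ≤ v i h := hmin h (Finset.mem_of_mem_erase hh)
      have h2 : v i h ≤ val (v i) ((A j).erase g) :=
        Finset.single_le_sum (fun k _ => hv i k) hh
      linarith
    have hrest : ∑ g' ∈ (A j).erase g, f g' ≤ x := by
      calc ∑ g' ∈ (A j).erase g, f g' ≤ ∑ g' ∈ (A j).erase g, v i g' :=
            Finset.sum_le_sum fun g' _ => min_le_left _ _
        _ ≤ x := herase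
    have hdecomp : ∑ g' ∈ A j, f g' = f g + ∑ g' ∈ (A j).erase g, f g' :=
      (Finset.add_sum_erase _ _ hg).symm
    have hfg : f g ≤ x := le_trans (min_le_left _ _) hvg
    linarith
  set T := Finset.univ.erase i with hT
  set P : Fin n → Prop := fun j => (A j).card ≤ 1 with hP
  set s1 := (T.filter P).card with hs1
  set s2 := (T.filter fun j => ¬ P j).card with hs2
  have hTcard : T.card = n - 1 := by
    rw [hT, Finset.card_erase_of_mem (Finset.mem_univ i)]
    simp
  have hcards : s1 + s2 = n - 1 := by
    rw [hs1, hs2, Finset.card_filter_add_card_filter_not, hTcard]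
  have hcast : (s1:ℝ) + (s2:ℝ) = (n:ℝ) - 1 := by
    have h' : s1 + s2 + 1 = n := by omega
    have h'' : ((s1:ℝ) + (s2:ℝ) + 1 = (n:ℝ)) := by exact_mod_cast h'
    linarith
  have hS0 : (0:ℝ) ≤ (s1:ℝ) := Nat.cast_nonneg _
  have hS20 : (0:ℝ) ≤ (s2:ℝ) := Nat.cast_nonneg _
  have hTsum : ∑ j ∈ T, ∑ g ∈ A j, f g ≤ (s1:ℝ) * tps + (s2:ℝ) * (2*x) := by
    rw [← Finset.sum_filter_add_sum_filter_not T P]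
    apply add_le_add
    · calc ∑ j ∈ T.filter P, ∑ g ∈ A j, f g ≤ ∑ _j ∈ T.filter P, tps :=
            Finset.sum_le_sum fun j hj => hsmall j (Finset.mem_filter.mp hj).2
        _ = (s1:ℝ) * tps := by rw [Finset.sum_const, nsmul_eq_mul]
    · calc ∑ j ∈ T.filter (fun j => ¬ P j), ∑ g ∈ A j, f g
            ≤ ∑ _j ∈ T.filter (fun j => ¬ P j), 2*x := by
            apply Finset.sum_le_sum
            intro j hj
            have := (Finset.mem_filter.mp hj).2
            exact hbig j (Nat.succ_le_of_lt (Nat.lt_of_not_le (by simpa [hP] using this)))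
        _ = (s2:ℝ) * (2*x) := by rw [Finset.sum_const, nsmul_eq_mul]
  have htotal : (n:ℝ) * tps ≤ x + ((s1:ℝ) * tps + (s2:ℝ) * (2*x)) := by
    have h1 : ∑ j, ∑ g ∈ A j, f g = (∑ g ∈ A i, f g) + ∑ j ∈ T, ∑ g ∈ A j, f g := by
      rw [hT]
      exact (Finset.add_sum_erase _ _ (Finset.mem_univ i)).symm
    have := hsumM
    rw [hsplit, h1] at this
    linarith
  -- replace s2 by n - 1 - s1
  have hs2eq : (s2:ℝ) = (n:ℝ) - 1 - (s1:ℝ) := by linarith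
  rw [hs2eq] at htotal hS20
  have hPpos : (0:ℝ) < 2*(n:ℝ) - 1 - 2*(s1:ℝ) := by linarith
  have hyp' : ((n:ℝ) - (s1:ℝ))*tps ≤ (2*(n:ℝ)-1-2*(s1:ℝ))*x := by nlinarith [htotal]
  rw [ge_iff_le, div_mul_eq_mul_div, div_le_iff₀ (by linarith : (0:ℝ) < 2*(n:ℝ)-1)]
  have key : (2*(n:ℝ)-1-2*(s1:ℝ)) * (x*(2*(n:ℝ)-1) - (n:ℝ)*tps)
      = (2*(n:ℝ)-1)*((2*(n:ℝ)-1-2*(s1:ℝ))*x - ((n:ℝ)-(s1:ℝ))*tps) + tps*(s1:ℝ) := by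
    ring
  have h1 : 0 ≤ (2*(n:ℝ)-1)*((2*(n:ℝ)-1-2*(s1:ℝ))*x - ((n:ℝ)-(s1:ℝ))*tps) + tps*(s1:ℝ) :=
    add_nonneg (mul_nonneg (by linarith) (by linarith)) (mul_nonneg ht0 hS0)
  nlinarith [key, h1, hPpos]
end

section
/- For every allocation instance with n agents and additive valuations, there exists an allocation A = (A_1,…,A_n) such that every agent i receives value v_i(A_i) at least (n/(2n−1))·TPS_i, i.e., at least an n/(2n−1) fraction of her truncated proportional share. -/
open Finset

/-- Bag filling along a list of small items: some agent in `T` can get a bundle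
worth at least her residual threshold `σ i`, while every agent in `T` values the
bundle at most `max (σ i') 0 + τ i'`. -/
lemma bagfill {ι : Type*} [DecidableEq ι] {n : ℕ} (v : Fin n → ι → ℝ)
    (τ : Fin n → ℝ) (T : Finset (Fin n)) (hτ0 : ∀ i, 0 ≤ τ i) :
    ∀ (L : List ι), L.Nodup →
    (∀ i ∈ T, ∀ j ∈ L, v i j < τ i) →
    ∀ (σ : Fin n → ℝ), (∃ i ∈ T, σ i ≤ (L.map (v i)).sum) →
    ∃ i ∈ T, ∃ B ⊆ L.toFinset, σ i ≤ _root_.val (v i) B ∧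
      ∀ i' ∈ T, _root_.val (v i') B ≤ max (σ i') 0 + τ i' := by
  intro L
  induction L with
  | nil =>
    intro _ _ σ H
    obtain ⟨i, hi, hσ⟩ := H
    refine ⟨i, hi, ∅, by simp, by simpa [_root_.val] using hσ, ?_⟩
    intro i' _
    have h1 := hτ0 i'
    have h2 : (0:ℝ) ≤ max (σ i') 0 := le_max_right _ _
    simp only [_root_.val, Finset.sum_empty]
    linarith
  | cons a L ih =>
    intro hnd hsmall σ H
    by_cases hb : ∃ i ∈ T, σ i ≤ v i a
    · obtain ⟨i, hi, h⟩ := hb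
      refine ⟨i, hi, {a}, by simp, by simpa [_root_.val] using h, ?_⟩
      intro i' hi'
      have h1 := hsmall i' hi' a List.mem_cons_self
      have h2 : (0:ℝ) ≤ max (σ i') 0 := le_max_right _ _
      simp only [_root_.val, Finset.sum_singleton]
      linarith
    · push_neg at hb
      obtain ⟨i, hi, hσ⟩ := H
      have hndL : L.Nodup := (List.nodup_cons.mp hnd).2
      have haL : a ∉ L := (List.nodup_cons.mp hnd).1
      have H' : ∃ i ∈ T, (σ i - v i a) ≤ (L.map (v i)).sum := by
        refine ⟨i, hi, ?_⟩
        simp only [List.map_cons, List.sum_cons] at hσ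
        linarith
      obtain ⟨i', hi', B, hBsub, hwin, hcost⟩ :=
        ih hndL (fun i hi j hj => hsmall i hi j (List.mem_cons_of_mem a hj))
          (fun i => σ i - v i a) H'
      have haB : a ∉ B := fun h => haL (List.mem_toFinset.mp (hBsub h))
      refine ⟨i', hi', insert a B, ?_, ?_, ?_⟩
      · simp only [List.toFinset_cons]
        exact Finset.insert_subset_insert a hBsub
      · have : _root_.val (v i') (insert a B) = v i' a + _root_.val (v i') B := Finset.sum_insert haB
        rw [this]
        linarith
      · intro i'' hi''
        have hva : v i'' a < σ i'' := hb i'' hi''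
        have h1 := hcost i'' hi''
        have hmax : max (σ i'' - v i'' a) 0 = σ i'' - v i'' a :=
          max_eq_left (by linarith)
        rw [hmax] at h1
        have h2 : _root_.val (v i'') (insert a B) = v i'' a + _root_.val (v i'') B :=
          Finset.sum_insert haB
        have h3 : σ i'' ≤ max (σ i'') 0 := le_max_left _ _
        rw [h2]
        linarith

/-- One step: some agent in `T` can be given a bundle worth at least `τ i` to her,
while costing every other agent at most `2 * τ i'` in truncated value. -/
lemma step_lemma {ι : Type*} [DecidableEq ι] {n : ℕ} (v : Fin n → ι → ℝ)
    (t τ : Fin n → ℝ)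
    (ht0 : ∀ i, 0 ≤ t i) (hτ0 : ∀ i, 0 ≤ τ i) (ht2 : ∀ i, t i ≤ 2 * τ i)
    (T : Finset (Fin n)) (hT : T.Nonempty) (S : Finset ι)
    (hinv : ∀ i ∈ T, ((T.card : ℝ) - 1) * (2 * τ i) + τ i ≤ ∑ j ∈ S, min (v i j) (t i)) :
    ∃ i ∈ T, ∃ B ⊆ S, τ i ≤ _root_.val (v i) B ∧
      ∀ i' ∈ T, i' ≠ i → ∑ j ∈ B, min (v i' j) (t i') ≤ 2 * τ i' := by
  by_cases hbig : ∃ i ∈ T, ∃ j ∈ S, τ i ≤ v i j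
  · obtain ⟨i, hi, j, hj, h⟩ := hbig
    refine ⟨i, hi, {j}, Finset.singleton_subset_iff.mpr hj, by simpa [_root_.val] using h, ?_⟩
    intro i' _ _
    simp only [Finset.sum_singleton]
    exact le_trans (min_le_right _ _) (ht2 i')
  · push_neg at hbig
    obtain ⟨i0, hi0⟩ := hT
    have hcard : (1:ℝ) ≤ (T.card : ℝ) := by
      exact_mod_cast Finset.card_pos.mpr ⟨i0, hi0⟩
    have H : ∃ i ∈ T, τ i ≤ (S.toList.map (v i)).sum := by
      refine ⟨i0, hi0, ?_⟩
      have h1 := hinv i0 hi0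
      have h2 : ∑ j ∈ S, min (v i0 j) (t i0) ≤ ∑ j ∈ S, v i0 j :=
        Finset.sum_le_sum (fun j _ => min_le_left _ _)
      have h3 : (S.toList.map (v i0)).sum = ∑ j ∈ S, v i0 j :=
        Finset.sum_map_toList S (v i0)
      have h4 : 0 ≤ ((T.card:ℝ) - 1) * (2 * τ i0) := by
        have := hτ0 i0
        nlinarith
      rw [h3]
      linarith
    obtain ⟨i, hi, B, hBsub, hwin, hcost⟩ :=
      bagfill v τ T hτ0 S.toList S.nodup_toList
        (fun i hi j hj => hbig i hi j (Finset.mem_toList.mp hj)) τ H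
    rw [Finset.toList_toFinset] at hBsub
    refine ⟨i, hi, B, hBsub, hwin, ?_⟩
    intro i' hi' _
    have h1 := hcost i' hi'
    have h2 : ∑ j ∈ B, min (v i' j) (t i') ≤ _root_.val (v i') B :=
      Finset.sum_le_sum (fun j _ => min_le_left _ _)
    rw [max_eq_left (hτ0 i')] at h1
    linarith

/-- Iterating the step lemma: all agents in `T` can be served disjoint bundles
from `S`, each worth at least her `τ`. -/
lemma alloc_aux {ι : Type*} [DecidableEq ι] {n : ℕ} (v : Fin n → ι → ℝ)
    (t τ : Fin n → ℝ)
    (ht0 : ∀ i, 0 ≤ t i) (hτ0 : ∀ i, 0 ≤ τ i) (ht2 : ∀ i, t i ≤ 2 * τ i) :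
    ∀ (k : ℕ) (T : Finset (Fin n)) (S : Finset ι), T.card = k →
    (∀ i ∈ T, ((T.card : ℝ) - 1) * (2 * τ i) + τ i ≤ ∑ j ∈ S, min (v i j) (t i)) →
    ∃ B : Fin n → Finset ι, (∀ i, B i ⊆ S) ∧
      (∀ i j, i ≠ j → Disjoint (B i) (B j)) ∧
      (∀ i ∉ T, B i = ∅) ∧ (∀ i ∈ T, τ i ≤ _root_.val (v i) (B i)) := by
  intro k
  induction k with
  | zero =>
    intro T S hT _
    refine ⟨fun _ => ∅, fun _ => Finset.empty_subset _,
      fun _ _ _ => Finset.disjoint_empty_left _, fun _ _ => rfl, ?_⟩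
    intro i hiT
    rw [Finset.card_eq_zero.mp hT] at hiT
    exact absurd hiT (Finset.notMem_empty i)
  | succ k ih =>
    intro T S hT hinv
    have hTne : T.Nonempty := Finset.card_pos.mp (hT ▸ k.succ_pos)
    obtain ⟨i, hi, Bag, hBag, hwin, hcost⟩ :=
      step_lemma v t τ ht0 hτ0 ht2 T hTne S hinv
    have hk : (T.erase i).card = k := by
      rw [Finset.card_erase_of_mem hi, hT]
      rfl
    have hinv' : ∀ i' ∈ T.erase i,
        (((T.erase i).card : ℝ) - 1) * (2 * τ i') + τ i' ≤
          ∑ j ∈ S \ Bag, min (v i' j) (t i') := by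
      intro i' hi'
      have hmem := Finset.mem_of_mem_erase hi'
      have hne := Finset.ne_of_mem_erase hi'
      have hsplit : ∑ j ∈ S \ Bag, min (v i' j) (t i') + ∑ j ∈ Bag, min (v i' j) (t i')
          = ∑ j ∈ S, min (v i' j) (t i') := Finset.sum_sdiff hBag
      have h1 := hinv i' hmem
      have h2 := hcost i' hmem hne
      have hc : ((T.erase i).card : ℝ) = (T.card : ℝ) - 1 := by
        rw [hk, hT]
        push_cast
        ring
      rw [hc]
      have hexp : ((T.card:ℝ) - 1 - 1) * (2 * τ i')
          = ((T.card:ℝ) - 1) * (2 * τ i') - 2 * τ i' := by ring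
      linarith
    obtain ⟨B', hB'sub, hB'disj, hB'out, hB'val⟩ := ih (T.erase i) (S \ Bag) hk hinv'
    refine ⟨fun j => if j = i then Bag else B' j, ?_, ?_, ?_, ?_⟩
    · intro j
      by_cases h : j = i
      · simpa [h] using hBag
      · simp only [if_neg h]
        exact (hB'sub j).trans Finset.sdiff_subset
    · intro a b hab
      by_cases ha : a = i <;> by_cases hb : b = i
      · exact absurd (ha.trans hb.symm) hab
      · simp only [ha, if_pos rfl, if_neg hb]
        exact (Finset.disjoint_sdiff.mono_right (hB'sub b)).symm.symm
      · simp only [hb, if_pos rfl, if_neg ha]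
        exact (Finset.disjoint_sdiff.mono_right (hB'sub a)).symm
      · simp only [if_neg ha, if_neg hb]
        exact hB'disj a b hab
    · intro j hj
      have hji : j ≠ i := fun h => hj (h ▸ hi)
      simp only [if_neg hji]
      exact hB'out j (fun h => hj (Finset.mem_of_mem_erase h))
    · intro i' hi'
      by_cases h : i' = i
      · simpa [h] using hwin
      · simp only [if_neg h]
        exact hB'val i' (Finset.mem_erase.mpr ⟨h, hi'⟩)

/-- there always exists an allocation giving every agent at least
an `n/(2n−1)` fraction of her truncated proportional share. -/
theorem stmt5 {ι : Type*} [Fintype ι] [DecidableEq ι] (n : ℕ) (hn : 1 ≤ n)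
    (v : Fin n → ι → ℝ) (hv : ∀ i j, 0 ≤ v i j)
    (tps : Fin n → ℝ) (htps : ∀ i, isTPS n Finset.univ (v i) (tps i)) :
    ∃ A : Fin n → Finset ι, isAlloc A ∧
      ∀ i, val (v i) (A i) ≥ ((n : ℝ) / (2 * (n : ℝ) - 1)) * tps i := by
  have hn1 : (1:ℝ) ≤ (n:ℝ) := by exact_mod_cast hn
  have hd : (0:ℝ) < 2 * (n:ℝ) - 1 := by linarith
  have hnn : (n:ℝ) ≠ 0 := by linarith
  set τ : Fin n → ℝ := fun i => (n:ℝ) / (2 * (n:ℝ) - 1) * tps i with hτdef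
  have ht0 : ∀ i, 0 ≤ tps i := fun i => (htps i).1.1
  have hτ0 : ∀ i, 0 ≤ τ i := fun i =>
    mul_nonneg (div_nonneg (by linarith) hd.le) (ht0 i)
  have ht2 : ∀ i, tps i ≤ 2 * τ i := by
    intro i
    have hkey : 2 * τ i - tps i = tps i / (2 * (n:ℝ) - 1) := by
      simp only [hτdef]
      field_simp
      ring
    have := div_nonneg (ht0 i) hd.le
    linarith
  have hsum : ∀ i, ∑ j, min (v i j) (tps i) = (n:ℝ) * tps i := by
    intro i
    have h := (htps i).1.2
    field_simp at h
    linarith [h]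
  have hinv : ∀ i ∈ (Finset.univ : Finset (Fin n)),
      (((Finset.univ : Finset (Fin n)).card : ℝ) - 1) * (2 * τ i) + τ i ≤
        ∑ j ∈ (Finset.univ : Finset ι), min (v i j) (tps i) := by
    intro i _
    have hc : ((Finset.univ : Finset (Fin n)).card : ℝ) = (n:ℝ) := by
      rw [Finset.card_univ, Fintype.card_fin]
    rw [hc, hsum i]
    have heq : ((n:ℝ) - 1) * (2 * τ i) + τ i = (n:ℝ) * tps i := by
      simp only [hτdef]
      have key : (n:ℝ) / (2 * (n:ℝ) - 1) * (2 * (n:ℝ) - 1) = n := div_mul_cancel₀ _ hd.ne'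
      linear_combination tps i * key
    linarith
  obtain ⟨B, hBsub, hBdisj, _, hBval⟩ :=
    alloc_aux v tps τ ht0 hτ0 ht2 n Finset.univ Finset.univ
      (by rw [Finset.card_univ, Fintype.card_fin]) hinv
  set i0 : Fin n := ⟨0, hn⟩ with hi0def
  set R : Finset ι := Finset.univ \ Finset.univ.biUnion B with hRdef
  refine ⟨fun i => if i = i0 then B i ∪ R else B i, ⟨?_, ?_⟩, ?_⟩
  · intro a b hab
    have hRB : ∀ c, Disjoint R (B c) := fun c =>
      Finset.sdiff_disjoint.mono_right (Finset.subset_biUnion_of_mem B (Finset.mem_univ c))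
    beta_reduce
    by_cases ha : a = i0 <;> by_cases hb : b = i0
    · exact absurd (ha.trans hb.symm) hab
    · rw [if_pos ha, if_neg hb]
      exact Finset.disjoint_union_left.mpr ⟨hBdisj a b hab, hRB b⟩
    · rw [if_neg ha, if_pos hb]
      exact Finset.disjoint_union_right.mpr ⟨hBdisj a b hab, (hRB a).symm⟩
    · rw [if_neg ha, if_neg hb]
      exact hBdisj a b hab
  · apply Finset.eq_univ_of_forall
    intro x
    rw [Finset.mem_biUnion]
    by_cases hx : x ∈ Finset.univ.biUnion B
    · obtain ⟨j, _, hj⟩ := Finset.mem_biUnion.mp hx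
      refine ⟨j, Finset.mem_univ j, ?_⟩
      by_cases h : j = i0
      · rw [if_pos h]
        exact Finset.mem_union_left _ hj
      · rw [if_neg h]
        exact hj
    · refine ⟨i0, Finset.mem_univ i0, ?_⟩
      rw [if_pos rfl]
      exact Finset.mem_union_right _ (Finset.mem_sdiff.mpr ⟨Finset.mem_univ x, hx⟩)
  · intro i
    have hτi := hBval i (Finset.mem_univ i)
    simp only [hτdef] at hτi
    beta_reduce
    by_cases h : i = i0
    · rw [if_pos h]
      have hle : _root_.val (v i) (B i) ≤ _root_.val (v i) (B i ∪ R) :=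
        Finset.sum_le_sum_of_subset_of_nonneg Finset.subset_union_left
          (fun j _ _ => hv i j)
      exact le_trans hτi hle
    · rw [if_neg h]
      exact hτi
end

section
/- For every n ≥ 1, consider the allocation instance with n agents and 2n−1 items in which every agent values every item at exactly 1. Then: (a) for every agent i, TPS_i = (2n−1)/n; (b) for every agent i, MMS_i = 1 (hence TPS_i = ((2n−1)/n)·MMS_i); and (c) in every allocation, at least one agent receives value at most 1, i.e., at most an n/(2n−1) fraction of her TPS. -/
open Finset

lemma val_one' {ι : Type*} (S : Finset ι) : val (fun _ => (1:ℝ)) S = S.card := by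
  simp [_root_.val]

lemma pigeon' (n : ℕ) (hn : 1 ≤ n) (A : Fin n → Finset (Fin (2 * n - 1)))
    (hA : isAlloc A) : ∃ i, (A i).card ≤ 1 := by
  have hsum : ∑ i, (A i).card = 2 * n - 1 := by
    rw [← Finset.card_biUnion (fun i _ j _ h => hA.1 i j h), hA.2]
    simp
  by_contra h
  push_neg at h
  have : ∑ i : Fin n, 2 ≤ ∑ i, (A i).card := Finset.sum_le_sum (fun i _ => h i)
  simp at this
  omega

lemma partB_mem' (n : ℕ) (hn : 1 ≤ n) :
    ∃ P : Fin n → Finset (Fin (2*n-1)),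
      isAlloc P ∧ (1:ℝ) = ⨅ i : Fin n, val (fun _ => (1:ℝ)) (P i) := by
  haveI : NeZero n := ⟨by omega⟩
  set P : Fin n → Finset (Fin (2*n-1)) :=
    fun i => Finset.univ.filter (fun j => (j:ℕ) = (i:ℕ) ∨ (j:ℕ) = (i:ℕ) + n) with hP
  refine ⟨P, ⟨?_, ?_⟩, ?_⟩
  · intro i j hij
    rw [Finset.disjoint_left]
    intro a ha ha'
    simp only [hP, Finset.mem_filter, Finset.mem_univ, true_and] at ha ha'
    have : (i:ℕ) ≠ (j:ℕ) := fun h => hij (Fin.ext h)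
    have hi := i.isLt; have hj := j.isLt
    omega
  · ext a
    simp only [hP, Finset.mem_biUnion, Finset.mem_univ, Finset.mem_filter, true_and, iff_true]
    have ha := a.isLt
    by_cases h : (a:ℕ) < n
    · exact ⟨⟨(a:ℕ), h⟩, Or.inl rfl⟩
    · refine ⟨⟨(a:ℕ) - n, by omega⟩, Or.inr ?_⟩
      simp; omega
  · have hval : ∀ i : Fin n, val (fun _ => (1:ℝ)) (P i) = (P i).card := fun i => val_one' _
    have hge : ∀ i : Fin n, (1:ℝ) ≤ val (fun _ => (1:ℝ)) (P i) := by
      intro i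
      rw [hval]
      have : (⟨(i:ℕ), by have := i.isLt; omega⟩ : Fin (2*n-1)) ∈ P i := by
        simp [hP]
      have h1 : 1 ≤ (P i).card := Finset.card_pos.mpr ⟨_, this⟩
      exact_mod_cast h1
    have hlast : P ⟨n-1, by omega⟩ = {(⟨n-1, by omega⟩ : Fin (2*n-1))} := by
      ext a
      simp only [hP, Finset.mem_filter, Finset.mem_univ, true_and, Finset.mem_singleton]
      have ha := a.isLt
      constructor
      · intro h; apply Fin.ext; simp only [Fin.val_mk] at h ⊢; omega
      · intro h; subst h; left; rfl
    have hle : val (fun _ => (1:ℝ)) (P ⟨n-1, by omega⟩) = 1 := by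
      rw [hval, hlast]; simp
    refine le_antisymm (le_ciInf hge) ?_
    calc ⨅ i, val (fun _ => (1:ℝ)) (P i) ≤ val (fun _ => (1:ℝ)) (P ⟨n-1, by omega⟩) :=
        ciInf_le (Set.Finite.bddBelow (Set.finite_range _)) _
      _ = 1 := hle

/-- in the instance with `n` agents and `2n−1` items all valued at `1`:
(a) every agent's TPS is `(2n−1)/n`; (b) every agent's MMS is `1`
(hence `TPS = ((2n−1)/n)·MMS`); and (c) in every allocation some agent gets value
at most `1`, i.e. at most an `n/(2n−1)` fraction of her TPS. -/
theorem stmt6 (n : ℕ) (hn : 1 ≤ n) :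
    isTPS n (Finset.univ : Finset (Fin (2 * n - 1))) (fun _ => (1 : ℝ))
        ((2 * (n : ℝ) - 1) / n) ∧
    isMMS (ι := Fin (2 * n - 1)) n (fun _ => (1 : ℝ)) 1 ∧
    (∀ A : Fin n → Finset (Fin (2 * n - 1)), isAlloc A →
      ∃ i, val (fun _ => (1 : ℝ)) (A i) ≤ 1) := by
  haveI : NeZero n := ⟨by omega⟩
  have hn' : (1:ℝ) ≤ n := by exact_mod_cast hn
  have hnpos : (0:ℝ) < n := by linarith
  have hcard : ((Fintype.card (Fin (2*n-1)) : ℕ) : ℝ) = 2*(n:ℝ) - 1 := by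
    simp; push_cast [Nat.cast_sub (by omega : 1 ≤ 2*n)]; ring
  have hc : ∀ A : Fin n → Finset (Fin (2 * n - 1)), isAlloc A →
      ∃ i, val (fun _ => (1 : ℝ)) (A i) ≤ 1 := by
    intro A hA
    obtain ⟨i, hi⟩ := pigeon' n hn A hA
    refine ⟨i, ?_⟩
    rw [val_one']
    exact_mod_cast hi
  refine ⟨⟨⟨?_, ?_⟩, ?_⟩, ⟨?_, ?_⟩, hc⟩
  · apply div_nonneg <;> linarith
  · have ht1 : (1:ℝ) ≤ (2 * (n : ℝ) - 1) / n := by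
      rw [le_div_iff₀ hnpos]; linarith
    simp only [min_eq_left ht1]
    rw [Finset.sum_const, card_univ, nsmul_eq_mul, mul_one, hcard]
  · rintro t' ⟨ht0, heq⟩
    have hmin : min (1:ℝ) t' ≤ 1 := min_le_left _ _
    have hsum : ∑ j : Fin (2*n-1), min (1:ℝ) t' ≤ 2*(n:ℝ) - 1 := by
      rw [Finset.sum_const, card_univ, nsmul_eq_mul, hcard]
      nlinarith [hcard]
    rw [← heq]
    gcongr
  · obtain ⟨P, hP, hPeq⟩ := partB_mem' n hn
    exact ⟨P, hP, hPeq⟩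
  · rintro x ⟨P, hP, rfl⟩
    obtain ⟨i, hi⟩ := hc P hP
    calc ⨅ i, val (fun _ => (1:ℝ)) (P i) ≤ val (fun _ => (1:ℝ)) (P i) :=
        ciInf_le (Set.Finite.bddBelow (Set.finite_range _)) _
      _ ≤ 1 := hi
end

section
/- For every n ≥ 2 and every ε with 0 < ε < 1, consider the instance with n agents and 2n−1 items {s_1,…,s_n, b_1,…,b_{n−1}} in which each agent i values s_i at 1+ε, values s_j at 1 − ε/(n−1) for each j ≠ i, and values b_j at n for each 1 ≤ j ≤ n−1. Then for every agent i, MMS_i = n and PS_i = n. -/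
open Finset

/-- in the instance with `n ≥ 2` agents and `2n−1` items
`{s_1,…,s_n, b_1,…,b_{n−1}}` (small items `Sum.inl`, big items `Sum.inr`),
where agent `i` values `s_i` at `1+ε`, values `s_j` (for `j ≠ i`) at `1 − ε/(n−1)`,
and values each `b_j` at `n`, every agent has `MMS_i = n` and `PS_i = n`. -/
theorem stmt10 (n : ℕ) (hn : 2 ≤ n) (ε : ℝ) (hε0 : 0 < ε) (hε1 : ε < 1)
    (v : Fin n → (Fin n ⊕ Fin (n - 1)) → ℝ)
    (hvs : ∀ i j : Fin n,
      v i (Sum.inl j) = if j = i then 1 + ε else 1 - ε / ((n : ℝ) - 1))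
    (hvb : ∀ (i : Fin n) (j : Fin (n - 1)), v i (Sum.inr j) = (n : ℝ)) :
    ∀ i : Fin n, isMMS n (v i) (n : ℝ) ∧ val (v i) Finset.univ / n = (n : ℝ) := by
  have hnR : (2:ℝ) ≤ (n:ℝ) := by exact_mod_cast hn
  have hne : (n:ℝ) - 1 ≠ 0 := by linarith
  have hnpos : (0:ℝ) < n := by linarith
  have hcard : ((n - 1 : ℕ) : ℝ) = (n:ℝ) - 1 := by
    have h1 : 1 ≤ n := by omega
    push_cast [h1]
    ring
  intro i
  have h0 : 0 < n := by omega
  haveI : Nonempty (Fin n) := ⟨⟨0, h0⟩⟩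
  have hsmall : ∑ j : Fin n, v i (Sum.inl j) = (n:ℝ) := by
    have h1 : ∑ j : Fin n, v i (Sum.inl j)
        = v i (Sum.inl i) + ∑ j ∈ univ.erase i, v i (Sum.inl j) :=
      (Finset.add_sum_erase _ _ (mem_univ i)).symm
    have h2 : ∑ j ∈ univ.erase i, v i (Sum.inl j)
        = ((n:ℝ) - 1) * (1 - ε / ((n:ℝ)-1)) := by
      have hc : ∀ j ∈ univ.erase i, v i (Sum.inl j) = 1 - ε / ((n:ℝ)-1) := fun j hj => by
        rw [hvs, if_neg (Finset.ne_of_mem_erase hj)]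
      rw [Finset.sum_congr rfl hc, Finset.sum_const,
        Finset.card_erase_of_mem (mem_univ i), Finset.card_univ, Fintype.card_fin,
        nsmul_eq_mul, hcard]
    rw [h1, h2, hvs, if_pos rfl]
    field_simp
    ring
  have hbig : ∀ j : Fin (n-1), v i (Sum.inr j) = (n:ℝ) := hvb i
  have htot : _root_.val (v i) Finset.univ = (n:ℝ)^2 := by
    unfold _root_.val
    rw [Fintype.sum_sum_type, hsmall,
      Finset.sum_congr rfl (fun j _ => hbig j), Finset.sum_const, Finset.card_univ,
      Fintype.card_fin, nsmul_eq_mul, hcard]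
    ring
  constructor
  · constructor
    · -- membership: witness partition
      let f : (Fin n ⊕ Fin (n-1)) → Fin n :=
        Sum.elim (fun _ => ⟨0, h0⟩) (fun j => ⟨j.val + 1, by omega⟩)
      have hval : ∀ k : Fin n, _root_.val (v i) (univ.filter (fun x => f x = k)) = (n:ℝ) := by
        intro k
        unfold _root_.val
        rw [Finset.sum_filter, Fintype.sum_sum_type]
        by_cases hk : k = ⟨0, h0⟩
        · subst hk
          have e1 : ∑ j : Fin n, (if f (Sum.inl j) = (⟨0,h0⟩:Fin n) then v i (Sum.inl j) else 0)
              = ∑ j : Fin n, v i (Sum.inl j) := by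
            refine Finset.sum_congr rfl fun j _ => ?_
            simp [f]
          have e2 : ∑ j : Fin (n-1),
              (if f (Sum.inr j) = (⟨0,h0⟩:Fin n) then v i (Sum.inr j) else 0) = 0 := by
            refine Finset.sum_eq_zero fun j _ => ?_
            have hne' : f (Sum.inr j) ≠ (⟨0,h0⟩:Fin n) := by
              simp [f, Fin.ext_iff]
            simp [hne']
          rw [e1, e2, hsmall, add_zero]
        · have hkv : 0 < k.val := by
            rcases Nat.eq_zero_or_pos k.val with h | h
            · exact absurd (Fin.ext h) hk
            · exact h
          have hkn : k.val - 1 < n - 1 := by omega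
          set j0 : Fin (n-1) := ⟨k.val - 1, hkn⟩ with hj0
          have e1 : ∑ j : Fin n, (if f (Sum.inl j) = k then v i (Sum.inl j) else 0) = 0 := by
            refine Finset.sum_eq_zero fun j _ => ?_
            have hne' : f (Sum.inl j) ≠ k := by
              simp only [f, Sum.elim_inl, Fin.ext_iff]
              omega
            simp [hne']
          have e2 : ∑ j : Fin (n-1), (if f (Sum.inr j) = k then v i (Sum.inr j) else 0)
              = (n:ℝ) := by
            have hiff : ∀ j : Fin (n-1), (f (Sum.inr j) = k) ↔ (j = j0) := by
              intro j
              simp only [f, Sum.elim_inr, Fin.ext_iff, hj0]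
              omega
            calc ∑ j : Fin (n-1), (if f (Sum.inr j) = k then v i (Sum.inr j) else 0)
                = ∑ j : Fin (n-1), (if j = j0 then (n:ℝ) else 0) := by
                  refine Finset.sum_congr rfl fun j _ => ?_
                  rw [hbig j, if_congr (hiff j) rfl rfl]
              _ = (n:ℝ) := by rw [Finset.sum_ite_eq' univ j0 (fun _ => (n:ℝ))]; simp
          rw [e1, e2, zero_add]
      refine ⟨fun k => univ.filter (fun x => f x = k), ⟨?_, ?_⟩, ?_⟩
      · intro a b hab
        rw [Finset.disjoint_left]
        intro x hxa hxb
        simp only [mem_filter] at hxa hxb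
        exact hab (hxa.2 ▸ hxb.2)
      · ext x
        simp only [mem_biUnion, mem_univ, mem_filter, true_and, iff_true]
        exact ⟨f x, rfl⟩
      · simp only [hval]
        exact (ciInf_const).symm
    · -- upper bound
      rintro x ⟨P, ⟨hdisj, hcov⟩, rfl⟩
      have hsum : ∑ k : Fin n, _root_.val (v i) (P k) = (n:ℝ)^2 := by
        rw [← htot]
        unfold _root_.val
        rw [← hcov, Finset.sum_biUnion]
        intro a _ b _ hab
        exact hdisj a b hab
      have hle : ∀ k : Fin n, (⨅ k : Fin n, _root_.val (v i) (P k)) ≤ _root_.val (v i) (P k) :=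
        fun k => ciInf_le (Set.Finite.bddBelow (Set.finite_range _)) k
      have hmul : (n:ℝ) * (⨅ k : Fin n, _root_.val (v i) (P k)) ≤ (n:ℝ)^2 := by
        calc (n:ℝ) * (⨅ k : Fin n, _root_.val (v i) (P k))
            = ∑ _k : Fin n, (⨅ k : Fin n, _root_.val (v i) (P k)) := by
              rw [Finset.sum_const, Finset.card_univ, Fintype.card_fin, nsmul_eq_mul]
          _ ≤ ∑ k : Fin n, _root_.val (v i) (P k) := Finset.sum_le_sum fun k _ => hle k
          _ = (n:ℝ)^2 := hsum
      nlinarith [hmul]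
  · rw [htot]
    field_simp
end

section
/- For every allocation instance with n agents and additive valuations, there exists a probability distribution over finitely many allocations such that: (a) for every agent i and item j, the probability that agent i receives item j equals 1/n (so the distribution implements the uniform fractional allocation, and in particular is ex-ante envy free and ex-ante proportional); and (b) every allocation in the support is Prop1. -/
open Finset

/-- An allocation is Prop1 if every agent either attains her proportional share,
or does so after adding one item not in her bundle. -/
def isProp1 {ι : Type*} [Fintype ι] {n : ℕ} (v : Fin n → ι → ℝ)
    (A : Fin n → Finset ι) : Prop :=
  ∀ i : Fin n, val (v i) (A i) ≥ val (v i) Finset.univ / n ∨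
    ∃ j, j ∉ A i ∧ val (v i) (A i) + v i j ≥ val (v i) Finset.univ / n

section helpers

private lemma lt_of_div_lt_div' {x y n : ℕ} (h : x / n < y / n) : x < y := by
  by_contra hc
  exact absurd (Nat.div_le_div_right (Nat.le_of_not_lt hc)) (Nat.not_le_of_lt h)

private lemma a_le {n a b s : ℕ} (hn : 1 ≤ n) (ha : a / n = b) (hlt : b < (n * (b+1) + s) / n) :
    a ≤ n * (b + 1) + s := by
  refine le_of_lt (lt_of_div_lt_div' (n := n) ?_)
  rw [ha]; exact hlt

private lemma div_block {n b s : ℕ} (hn : 1 ≤ n) (hs : s < n) : (n * b + s) / n = b := by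
  rw [Nat.mul_add_div hn, Nat.div_eq_of_lt hs, Nat.add_zero]

private lemma sum_blocks (g : ℕ → ℝ) (n K : ℕ) :
    ∑ t ∈ range (n * K), g t = ∑ b ∈ range K, ∑ s ∈ range n, g (n * b + s) := by
  induction K with
  | zero => simp
  | succ K ih =>
      rw [Nat.mul_succ, Finset.sum_range_add, ih, Finset.sum_range_succ]

private lemma block_le (g : ℕ → ℝ) (n : ℕ) (hmono : ∀ s t : ℕ, s ≤ t → g t ≤ g s)
    {x b : ℕ} (hx : ∀ s < n, x ≤ n * b + s) :
    ∑ s ∈ range n, g (n * b + s) ≤ n * g x := by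
  calc ∑ s ∈ range n, g (n * b + s) ≤ ∑ s ∈ range n, g x := by
        refine Finset.sum_le_sum fun s hs => hmono _ _ (hx s (mem_range.1 hs))
    _ = n * g x := by simp [mul_comm]

-- main inequality, case B (top item possibly outside the bundle)
private lemma L_main {n K : ℕ} (hn : 1 ≤ n) (hK : 1 ≤ K) (g : ℕ → ℝ)
    (hg0 : ∀ t, 0 ≤ g t) (hmono : ∀ s t : ℕ, s ≤ t → g t ≤ g s)
    (a : ℕ → ℕ) (ha : ∀ b < K, a b / n = b) :
    ∑ t ∈ range (n * K), g t ≤ n * ((∑ b ∈ range K, g (a b)) + g 0) := by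
  have hblocks := sum_blocks g n K
  have hSB0 : ∑ s ∈ range n, g (n * 0 + s) ≤ n * g 0 :=
    block_le g n hmono fun s hs => Nat.zero_le _
  have hSB : ∀ b ∈ range (K - 1), ∑ s ∈ range n, g (n * (b+1) + s) ≤ n * g (a b) := by
    intro b hb
    have hbK := mem_range.1 hb
    refine block_le g n hmono fun s hs => a_le hn (ha b (by omega : b < K)) ?_
    rw [div_block hn hs]; omega
  have hsplit : ∑ b ∈ range K, ∑ s ∈ range n, g (n * b + s)
      = (∑ b ∈ range (K-1), ∑ s ∈ range n, g (n * (b+1) + s)) + ∑ s ∈ range n, g (n * 0 + s) := by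
    conv_lhs => rw [show K = (K - 1) + 1 by omega]
    rw [Finset.sum_range_succ']
  have h1 : ∑ b ∈ range (K-1), ∑ s ∈ range n, g (n * (b+1) + s)
      ≤ ∑ b ∈ range (K-1), n * g (a b) := Finset.sum_le_sum hSB
  have h2 : ∑ b ∈ range (K-1), n * g (a b) ≤ ∑ b ∈ range K, n * g (a b) := by
    refine Finset.sum_le_sum_of_subset_of_nonneg ?_ fun b _ _ => mul_nonneg (by positivity) (hg0 _)
    exact Finset.range_subset_range.2 (by omega)
  have h3 : ∑ b ∈ range K, n * g (a b) = n * ∑ b ∈ range K, g (a b) := by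
    rw [Finset.mul_sum]
  rw [hblocks, hsplit]
  rw [h3] at h2
  nlinarith [h1, h2, hSB0]

-- case C: a 0 = 0 (top item inside the bundle), use second item as witness
private lemma L_caseC {n K : ℕ} (hn : 2 ≤ n) (hK : 1 ≤ K) (g : ℕ → ℝ)
    (hg0 : ∀ t, 0 ≤ g t) (hmono : ∀ s t : ℕ, s ≤ t → g t ≤ g s)
    (a : ℕ → ℕ) (ha : ∀ b < K, a b / n = b) (ha0 : a 0 = 0) :
    ∑ t ∈ range (n * K), g t ≤ n * ((∑ b ∈ range K, g (a b)) + g 1) := by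
  have hn1 : 1 ≤ n := by omega
  have hblocks := sum_blocks g n K
  have hSB0 : ∑ s ∈ range n, g (n * 0 + s) ≤ n * g 0 :=
    block_le g n hmono fun s hs => Nat.zero_le _
  have hSB1 : ∑ s ∈ range n, g (n * 1 + s) ≤ n * g 1 :=
    block_le g n hmono fun s hs => by omega
  rcases eq_or_lt_of_le hK with h1 | hK2
  · -- K = 1
    rw [hblocks, ← h1]
    have : ∑ b ∈ range 1, ∑ s ∈ range n, g (n * b + s) = ∑ s ∈ range n, g (n * 0 + s) := by
      simp
    rw [this]
    have hsum : ∑ b ∈ range 1, g (a b) = g 0 := by simp [ha0]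
    nlinarith [hSB0, hg0 1]
  · -- K ≥ 2
    have hKK : 2 ≤ K := hK2
    have hSB : ∀ b ∈ range (K - 2), ∑ s ∈ range n, g (n * (b+2) + s) ≤ n * g (a (b+1)) := by
      intro b hb
      have hbK := mem_range.1 hb
      refine block_le g n hmono fun s hs => a_le hn1 (ha (b+1) (by omega : b+1 < K)) ?_
      rw [div_block hn1 hs]; omega
    have hsplit : ∑ b ∈ range K, ∑ s ∈ range n, g (n * b + s)
        = ((∑ b ∈ range (K-2), ∑ s ∈ range n, g (n * (b+2) + s))
            + ∑ s ∈ range n, g (n * 1 + s)) + ∑ s ∈ range n, g (n * 0 + s) := by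
      conv_lhs => rw [show K = (K - 1) + 1 by omega]
      rw [Finset.sum_range_succ']
      congr 1
      conv_lhs => rw [show K - 1 = (K - 2) + 1 by omega]
      rw [Finset.sum_range_succ']
    have hasplit : ∑ b ∈ range K, g (a b)
        = (∑ b ∈ range (K-1), g (a (b+1))) + g (a 0) := by
      conv_lhs => rw [show K = (K - 1) + 1 by omega]
      rw [Finset.sum_range_succ']
    have h1 : ∑ b ∈ range (K-2), ∑ s ∈ range n, g (n * (b+2) + s)
        ≤ ∑ b ∈ range (K-2), n * g (a (b+1)) := Finset.sum_le_sum hSB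
    have h2 : ∑ b ∈ range (K-2), n * g (a (b+1)) ≤ ∑ b ∈ range (K-1), n * g (a (b+1)) := by
      refine Finset.sum_le_sum_of_subset_of_nonneg ?_ fun b _ _ => mul_nonneg (by positivity) (hg0 _)
      exact Finset.range_subset_range.2 (by omega)
    have h3 : ∑ b ∈ range (K-1), n * g (a (b+1)) = n * ∑ b ∈ range (K-1), g (a (b+1)) := by
      rw [Finset.mul_sum]
    rw [hblocks, hsplit, hasplit]
    rw [h3] at h2
    have hga0 : g (a 0) = g 0 := by rw [ha0]
    nlinarith [h1, h2, hSB0, hSB1]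


end helpers

private lemma core {ι : Type*} [Fintype ι] [DecidableEq ι] (n : ℕ) (hn : 1 ≤ n)
    (v : Fin n → ι → ℝ) (hv : ∀ i j, 0 ≤ v i j) (hdvd : n ∣ Fintype.card ι) :
    ∃ (ℓ : ℕ) (A : Fin ℓ → Fin n → Finset ι) (p : Fin ℓ → ℝ),
      (∀ k, 0 ≤ p k) ∧ (∑ k, p k = 1) ∧ (∀ k, isAlloc (A k)) ∧
      (∀ (i : Fin n) (j : ι),
        (∑ k, p k * (if j ∈ A k i then (1 : ℝ) else 0)) = 1 / n) ∧
      (∀ k, 0 < p k → isProp1 v (A k)) := by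
  classical
  obtain ⟨K, hK⟩ := hdvd
  have hn0 : 0 < n := hn
  set m' := Fintype.card ι with hm'
  let e0 : Fin m' ≃ ι := (Fintype.equivFin ι).symm
  let enum : Fin n → (Fin m' ≃ ι) := fun i =>
    ((Tuple.sort (fun t => - v i (e0 t))) : Fin m' ≃ Fin m').trans e0
  have hmono : ∀ (i : Fin n) (t s : Fin m'), t ≤ s → v i (enum i s) ≤ v i (enum i t) := by
    intro i t s h
    have h2 := Tuple.monotone_sort (fun t => - v i (e0 t)) h
    simp only [Function.comp_apply] at h2
    have : enum i t = e0 (Tuple.sort (fun t => - v i (e0 t)) t) := rfl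
    rw [this]
    have : enum i s = e0 (Tuple.sort (fun t => - v i (e0 t)) s) := rfl
    rw [this]
    linarith
  let rank : Fin n → (ι ≃ Fin m') := fun i => (enum i).symm
  have hcard : Fintype.card ι = Fintype.card (Fin n × Fin K) := by simp [← hm', hK]
  let cIdx : ι ≃ Fin n × Fin K := Fintype.equivOfCardEq hcard
  have hblkK : ∀ (i : Fin n) (j : ι), ((rank i j : ℕ) / n) < K := by
    intro i j
    have h2 : (rank i j : ℕ) < n * K := by rw [← hK]; exact (rank i j).2
    exact Nat.div_lt_of_lt_mul h2
  let blkF : Fin n → ι → Fin K := fun i j => ⟨(rank i j : ℕ) / n, hblkK i j⟩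
  let Ment : ι → Fin n × Fin K → ℝ := fun j q => if q.2 = blkF q.1 j then 1 / n else 0
  let Mmat : Matrix ι ι ℝ := fun j c => Ment j (cIdx c)
  have hcol : ∀ (i : Fin n) (b : Fin K), ∑ j : ι, Ment j (i, b) = 1 := by
    intro i b
    have h1 : ∑ j : ι, Ment j (i, b) = ∑ t : Fin m', Ment (enum i t) (i, b) :=
      (Equiv.sum_comp (enum i) (fun j => Ment j (i, b))).symm
    have h2 : ∀ t : Fin m', Ment (enum i t) (i, b) =
        if (b : ℕ) = (t : ℕ) / n then (1 : ℝ) / n else 0 := by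
      intro t
      unfold Ment blkF rank
      simp only [Equiv.symm_apply_apply, Fin.ext_iff]
    rw [h1, Finset.sum_congr rfl fun t _ => h2 t]
    have h3 : ∑ t : Fin m', (if (b : ℕ) = (t : ℕ) / n then (1:ℝ) / n else 0)
        = ∑ t ∈ range m', (if (b : ℕ) = t / n then (1:ℝ) / n else 0) :=
      Fin.sum_univ_eq_sum_range (fun t => if (b : ℕ) = t / n then (1:ℝ) / n else 0) m'
    rw [h3, hK, sum_blocks (fun t => if (b : ℕ) = t / n then (1:ℝ) / n else 0) n K]
    have h4 : ∀ b' ∈ range K,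
        (∑ s ∈ range n, if (b : ℕ) = (n * b' + s) / n then (1:ℝ) / n else 0)
          = if (b : ℕ) = b' then 1 else 0 := by
      intro b' _
      have h5 : ∀ s ∈ range n,
          (if (b : ℕ) = (n * b' + s) / n then (1:ℝ) / n else 0)
            = if (b : ℕ) = b' then (1:ℝ) / n else 0 := by
        intro s hs
        rw [div_block hn (mem_range.1 hs)]
      rw [Finset.sum_congr rfl h5]
      by_cases hbb : (b : ℕ) = b'
      · simp only [if_pos hbb, Finset.sum_const, card_range, nsmul_eq_mul]
        field_simp
      · simp [hbb]
    rw [Finset.sum_congr rfl h4, Finset.sum_ite_eq]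
    simp [b.2]
  have hMds : Mmat ∈ doublyStochastic ℝ ι := by
    rw [mem_doublyStochastic_iff_sum]
    refine ⟨fun j c => by unfold Mmat Ment; split <;> positivity, ?_, ?_⟩
    · intro j
      have h1 : ∑ c : ι, Mmat j c = ∑ q : Fin n × Fin K, Ment j q := Equiv.sum_comp cIdx (Ment j)
      rw [h1, Fintype.sum_prod_type]
      have h2 : ∀ i : Fin n, ∑ b : Fin K, Ment j (i, b) = 1 / n := by
        intro i
        unfold Ment
        simp
      rw [Finset.sum_congr rfl fun i _ => h2 i]
      simp
      field_simp
    · intro c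
      have h1 : ∑ j : ι, Mmat j c = ∑ j : ι, Ment j (cIdx c) := rfl
      rw [h1, ← hcol (cIdx c).1 (cIdx c).2]
  obtain ⟨w, hw0, hw1, hwM⟩ := exists_eq_sum_perm_of_mem_doublyStochastic hMds
  have hMentry : ∀ (j c : ι),
      Mmat j c = ∑ σ : Equiv.Perm ι, w σ * (if σ j = c then 1 else 0) := by
    intro j c
    have h0 := congrFun (congrFun hwM j) c
    rw [← h0]
    rw [Matrix.sum_apply]
    refine Finset.sum_congr rfl fun σ _ => ?_
    simp [Matrix.smul_apply, Equiv.Perm.permMatrix, PEquiv.toMatrix_apply,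
      Equiv.toPEquiv_apply, Option.mem_def]
  have hsupp : ∀ σ : Equiv.Perm ι, 0 < w σ → ∀ j : ι,
      (cIdx (σ j)).2 = blkF (cIdx (σ j)).1 j := by
    intro σ hσ j
    by_contra hc
    have hz : Mmat j (σ j) = 0 := by
      unfold Mmat Ment; rw [if_neg hc]
    have hpos : 0 < Mmat j (σ j) := by
      rw [hMentry]
      refine lt_of_lt_of_le hσ ?_
      have hle := Finset.single_le_sum
        (f := fun τ : Equiv.Perm ι => w τ * (if τ j = σ j then (1:ℝ) else 0))
        (fun τ _ => mul_nonneg (hw0 τ) (by split <;> norm_num)) (mem_univ σ)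
      simpa using hle
    rw [hz] at hpos; exact lt_irrefl _ hpos
  -- the distribution
  set eP : Fin (Fintype.card (Equiv.Perm ι)) ≃ Equiv.Perm ι :=
    (Fintype.equivFin (Equiv.Perm ι)).symm with heP
  refine ⟨Fintype.card (Equiv.Perm ι),
    fun k i => univ.filter (fun j => (cIdx ((eP k) j)).1 = i),
    fun k => w (eP k), fun k => hw0 _, ?_, ?_, ?_, ?_⟩
  · exact (Equiv.sum_comp eP w).trans hw1
  · intro k
    constructor
    · intro i i' hii
      rw [Finset.disjoint_left]
      intro j hj hj'
      simp only [mem_filter, mem_univ, true_and] at hj hj'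
      exact hii (hj ▸ hj')
    · ext j
      simp only [mem_biUnion, mem_filter, mem_univ, true_and, iff_true]
      exact ⟨_, rfl⟩
  · -- marginals
    intro i j
    have hstep : ∀ σ : Equiv.Perm ι, (if (cIdx (σ j)).1 = i then (1:ℝ) else 0)
        = ∑ b : Fin K, (if σ j = cIdx.symm (i, b) then (1:ℝ) else 0) := by
      intro σ
      have hiff : ∀ b : Fin K, (σ j = cIdx.symm (i, b))
          ↔ ((cIdx (σ j)).1 = i ∧ (cIdx (σ j)).2 = b) := by
        intro b
        rw [Equiv.eq_symm_apply, Prod.ext_iff]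
      by_cases h : (cIdx (σ j)).1 = i
      · rw [if_pos h]
        have hcong : ∀ b : Fin K, (if σ j = cIdx.symm (i, b) then (1:ℝ) else 0)
            = (if (cIdx (σ j)).2 = b then (1:ℝ) else 0) := by
          intro b
          by_cases hb : (cIdx (σ j)).2 = b
          · rw [if_pos hb, if_pos ((hiff b).2 ⟨h, hb⟩)]
          · rw [if_neg hb, if_neg (fun hc => hb ((hiff b).1 hc).2)]
        rw [Finset.sum_congr rfl fun b _ => hcong b, Finset.sum_ite_eq]
        simp
      · rw [if_neg h]
        symm
        apply Finset.sum_eq_zero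
        intro b _
        rw [if_neg (fun hc => h ((hiff b).1 hc).1)]
    have h1 : (∑ k, w (eP k) * (if j ∈ univ.filter (fun j' => (cIdx ((eP k) j')).1 = i)
          then (1:ℝ) else 0))
        = ∑ σ : Equiv.Perm ι, w σ * (if (cIdx (σ j)).1 = i then (1:ℝ) else 0) := by
      rw [← Equiv.sum_comp eP
        (fun σ => w σ * (if (cIdx (σ j)).1 = i then (1:ℝ) else 0))]
      refine Finset.sum_congr rfl fun k _ => ?_
      congr 1
      simp [mem_filter]
    rw [h1]
    calc ∑ σ : Equiv.Perm ι, w σ * (if (cIdx (σ j)).1 = i then (1:ℝ) else 0)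
        = ∑ σ : Equiv.Perm ι, ∑ b : Fin K,
            w σ * (if σ j = cIdx.symm (i, b) then (1:ℝ) else 0) := by
          refine Finset.sum_congr rfl fun σ _ => ?_
          rw [hstep σ, Finset.mul_sum]
      _ = ∑ b : Fin K, ∑ σ : Equiv.Perm ι,
            w σ * (if σ j = cIdx.symm (i, b) then (1:ℝ) else 0) := Finset.sum_comm
      _ = ∑ b : Fin K, Mmat j (cIdx.symm (i, b)) := by
          refine Finset.sum_congr rfl fun b _ => (hMentry j _).symm
      _ = ∑ b : Fin K, (if b = blkF i j then (1:ℝ) / n else 0) := by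
          refine Finset.sum_congr rfl fun b _ => ?_
          show Ment j (cIdx (cIdx.symm (i, b))) = _
          rw [Equiv.apply_symm_apply]
      _ = 1 / n := by rw [Finset.sum_ite_eq']; simp
  · -- Prop1
    intro k hk
    intro i
    set σ : Equiv.Perm ι := eP k with hσdef
    have hσ : 0 < w σ := hk
    set Ai : Finset ι := univ.filter (fun j => (cIdx (σ j)).1 = i) with hAidef
    let j0 : Fin K → ι := fun b => σ.symm (cIdx.symm (i, b))
    have hj0 : ∀ b, cIdx (σ (j0 b)) = (i, b) := by intro b; simp [j0]
    have hAeq : Ai = Finset.image j0 univ := by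
      ext j
      simp only [hAidef, mem_filter, mem_univ, true_and, mem_image]
      constructor
      · intro h
        refine ⟨(cIdx (σ j)).2, ?_⟩
        have h2 : (i, (cIdx (σ j)).2) = cIdx (σ j) := by rw [← h]
        show σ.symm (cIdx.symm (i, (cIdx (σ j)).2)) = j
        rw [h2, Equiv.symm_apply_apply, Equiv.symm_apply_apply]
      · rintro ⟨b, rfl⟩
        rw [hj0 b]
    have hj0inj : Function.Injective j0 := by
      intro b b' h
      have h2 := congrArg (fun j => (cIdx (σ j)).2) h
      simpa [hj0] using h2
    have hkey : ∀ b : Fin K, ((rank i (j0 b) : ℕ)) / n = (b : ℕ) := by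
      intro b
      have h := hsupp σ hσ (j0 b)
      rw [hj0 b] at h
      have h2 := congrArg (Fin.val) h
      simpa [blkF] using h2.symm
    set gN : ℕ → ℝ := fun t => if h : t < m' then v i (enum i ⟨t, h⟩) else 0 with hgN
    set aN : ℕ → ℕ := fun b => if h : b < K then (rank i (j0 ⟨b, h⟩) : ℕ) else 0 with haNdef
    have hgNF : ∀ t : Fin m', gN (t : ℕ) = v i (enum i t) := by
      intro t
      rw [hgN]; dsimp only; rw [dif_pos t.2]
    have hgN0 : ∀ t, 0 ≤ gN t := by
      intro t; rw [hgN]; dsimp only; split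
      · exact hv i _
      · exact le_refl 0
    have hgmono : ∀ s t : ℕ, s ≤ t → gN t ≤ gN s := by
      intro s t hst
      by_cases ht : t < m'
      · have hs : s < m' := lt_of_le_of_lt hst ht
        rw [hgN]; dsimp only; rw [dif_pos ht, dif_pos hs]
        exact hmono i ⟨s, hs⟩ ⟨t, ht⟩ hst
      · have hz : gN t = 0 := by rw [hgN]; dsimp only; rw [dif_neg ht]
        rw [hz]; exact hgN0 s
    have haNF : ∀ b : Fin K, aN (b : ℕ) = (rank i (j0 b) : ℕ) := by
      intro b
      rw [haNdef]; dsimp only; rw [dif_pos b.2]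
    have haN : ∀ b, b < K → aN b / n = b := by
      intro b hb
      have h2 := haNF ⟨b, hb⟩
      rw [h2]
      exact hkey ⟨b, hb⟩
    have htot : val (v i) univ = ∑ t ∈ range (n * K), gN t := by
      have e2 : ∑ j : ι, v i j = ∑ t : Fin m', v i (enum i t) :=
        (Equiv.sum_comp (enum i) (v i)).symm
      have e5 : val (v i) univ = ∑ t : Fin m', gN (t : ℕ) := by
        unfold _root_.val
        rw [e2]
        exact Finset.sum_congr rfl fun t _ => (hgNF t).symm
      rw [e5, Fin.sum_univ_eq_sum_range gN m', hK]
    have hvalA : val (v i) Ai = ∑ b ∈ range K, gN (aN b) := by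
      unfold _root_.val
      rw [hAeq, Finset.sum_image (fun b _ b' _ h => hj0inj h)]
      have e4 : ∀ b : Fin K, v i (j0 b) = gN (aN (b : ℕ)) := by
        intro b
        rw [haNF b]
        rw [hgNF (rank i (j0 b))]
        rw [show enum i (rank i (j0 b)) = j0 b from (enum i).apply_symm_apply (j0 b)]
      rw [Finset.sum_congr rfl fun b _ => e4 b]
      exact Fin.sum_univ_eq_sum_range (fun b => gN (aN b)) K
    by_cases hK0 : K = 0
    · left
      have hz : val (v i) univ = 0 := by rw [htot, hK0]; simp
      rw [hz]
      have hnn : 0 ≤ val (v i) Ai := Finset.sum_nonneg fun j _ => hv i j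
      simpa using hnn
    have hK1 : 1 ≤ K := Nat.one_le_iff_ne_zero.2 hK0
    by_cases hn1 : n = 1
    · left
      have hvaleq : val (v i) Ai = val (v i) univ := by
        rw [hvalA, htot, hn1, one_mul]
        refine Finset.sum_congr rfl fun b hb => ?_
        have h2 := haN b (mem_range.1 hb)
        rw [hn1, Nat.div_one] at h2
        rw [h2]
      rw [hvaleq, hn1]
      simp
    have hn2 : 2 ≤ n := by omega
    have h0m : 0 < m' := by rw [hK]; exact Nat.mul_pos hn0 hK1
    have h1m : 1 < m' := by
      rw [hK]
      have h2 := Nat.mul_le_mul hn2 hK1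
      omega
    by_cases hjs : enum i ⟨0, h0m⟩ ∈ Ai
    · -- top item inside: use second item as witness
      have hb0 : ∃ b : Fin K, j0 b = enum i ⟨0, h0m⟩ := by
        rw [hAeq] at hjs; simpa using hjs
      obtain ⟨b, hbeq⟩ := hb0
      have hrank0 : (rank i (j0 b) : ℕ) = 0 := by
        rw [hbeq]
        show ((enum i).symm (enum i ⟨0, h0m⟩) : Fin m').val = 0
        rw [Equiv.symm_apply_apply]
      have hbval : (b : ℕ) = 0 := by rw [← hkey b, hrank0, Nat.zero_div]
      have ha0 : aN 0 = 0 := by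
        have h2 : aN ((b : ℕ)) = 0 := by rw [haNF b, hrank0]
        rwa [hbval] at h2
      have hj2 : enum i ⟨1, h1m⟩ ∉ Ai := by
        intro hmem
        rw [hAeq] at hmem
        have hb1 : ∃ b' : Fin K, j0 b' = enum i ⟨1, h1m⟩ := by simpa using hmem
        obtain ⟨b', hb'eq⟩ := hb1
        have hrank1 : (rank i (j0 b') : ℕ) = 1 := by
          rw [hb'eq]
          show ((enum i).symm (enum i ⟨1, h1m⟩) : Fin m').val = 1
          rw [Equiv.symm_apply_apply]
        have hb'val : (b' : ℕ) = 0 := by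
          rw [← hkey b', hrank1]
          exact Nat.div_eq_of_lt (by omega)
        have hbb : b' = b := Fin.ext (hb'val.trans hbval.symm)
        rw [hbb, hbeq] at hb'eq
        have := (enum i).injective hb'eq
        simp at this
      right
      refine ⟨enum i ⟨1, h1m⟩, hj2, ?_⟩
      have hineq := L_caseC hn2 hK1 gN hgN0 hgmono aN haN ha0
      have hg1 : v i (enum i ⟨1, h1m⟩) = gN 1 := (hgNF ⟨1, h1m⟩).symm
      rw [ge_iff_le, div_le_iff₀ (show (0:ℝ) < n by positivity), htot, hvalA, hg1]
      nlinarith [hineq]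
    · -- top item outside: use it as witness
      right
      refine ⟨enum i ⟨0, h0m⟩, hjs, ?_⟩
      have hineq := L_main hn hK1 gN hgN0 hgmono aN haN
      have hg0 : v i (enum i ⟨0, h0m⟩) = gN 0 := (hgNF ⟨0, h0m⟩).symm
      rw [ge_iff_le, div_le_iff₀ (show (0:ℝ) < n by positivity), htot, hvalA, hg0]
      nlinarith [hineq]

/-- there is a distribution over finitely many allocations in which
every agent receives every item with probability exactly `1/n` (so it implements
the uniform fractional allocation, hence is ex-ante envy free and ex-ante
proportional), and every allocation in the support is Prop1. -/
theorem stmt13 {ι : Type*} [Fintype ι] [DecidableEq ι] (n : ℕ) (hn : 1 ≤ n)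
    (v : Fin n → ι → ℝ) (hv : ∀ i j, 0 ≤ v i j) :
    ∃ (ℓ : ℕ) (A : Fin ℓ → Fin n → Finset ι) (p : Fin ℓ → ℝ),
      (∀ k, 0 ≤ p k) ∧ (∑ k, p k = 1) ∧ (∀ k, isAlloc (A k)) ∧
      (∀ (i : Fin n) (j : ι),
        (∑ k, p k * (if j ∈ A k i then (1 : ℝ) else 0)) = 1 / n) ∧
      (∀ k, 0 < p k → isProp1 v (A k)) := by
  classical
  have hn0 : 0 < n := hn
  set r : ℕ := (n - Fintype.card ι % n) % n with hr
  have hdvd : n ∣ Fintype.card ι + r := by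
    by_cases h : Fintype.card ι % n = 0
    · have hz : r = 0 := by rw [hr, h, Nat.sub_zero, Nat.mod_self]
      rw [hz, Nat.add_zero]
      exact Nat.dvd_of_mod_eq_zero h
    · have hlt : Fintype.card ι % n < n := Nat.mod_lt _ hn0
      have h2 : n - Fintype.card ι % n < n := by omega
      have h3 : r = n - Fintype.card ι % n := by rw [hr]; exact Nat.mod_eq_of_lt h2
      have h4 : Fintype.card ι + (n - Fintype.card ι % n)
          = n * (Fintype.card ι / n + 1) := by
        have h5 := Nat.div_add_mod (Fintype.card ι) n
        have h6 : n * (Fintype.card ι / n + 1) = n * (Fintype.card ι / n) + n := by ring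
        omega
      rw [h3, h4]
      exact Dvd.intro _ rfl
  let v' : Fin n → (ι ⊕ Fin r) → ℝ := fun i => Sum.elim (v i) (fun _ => 0)
  have hv' : ∀ i j, 0 ≤ v' i j := by rintro i (j | j); exacts [hv i j, le_refl 0]
  obtain ⟨ℓ, A', p, hp0, hp1, hAlloc, hmarg, hprop⟩ :=
    core n hn v' hv' (by rw [Fintype.card_sum, Fintype.card_fin]; exact hdvd)
  refine ⟨ℓ, fun k i => (A' k i).toLeft, p, hp0, hp1, ?_, ?_, ?_⟩
  · intro k
    obtain ⟨hd, hu⟩ := hAlloc k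
    constructor
    · intro i i' hii
      rw [Finset.disjoint_left]
      intro j hj hj'
      rw [Finset.mem_toLeft] at hj hj'
      exact (Finset.disjoint_left.1 (hd i i' hii)) hj hj'
    · ext j
      simp only [mem_biUnion, Finset.mem_toLeft, mem_univ, iff_true]
      have hmem : (Sum.inl j : ι ⊕ Fin r) ∈ Finset.univ.biUnion (A' k) := by
        rw [hu]; exact mem_univ _
      simpa using hmem
  · intro i j
    have h2 := hmarg i (Sum.inl j)
    simp only [Finset.mem_toLeft]
    exact h2
  · intro k hk i
    have hP := hprop k hk i
    have hvalA : val (v' i) (A' k i) = val (v i) ((A' k i).toLeft) := by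
      unfold _root_.val
      conv_lhs => rw [← Finset.toLeft_disjSum_toRight (u := A' k i)]
      rw [Finset.sum_disjSum]
      have hz : ∑ x ∈ (A' k i).toRight, v' i (Sum.inr x) = 0 := by simp [v']
      rw [hz, add_zero]
      rfl
    have hvalU : val (v' i) (univ : Finset (ι ⊕ Fin r)) = val (v i) univ := by
      unfold _root_.val
      rw [Fintype.sum_sum_type]
      simp [v']
    rcases hP with h | ⟨j', hj', hineq⟩
    · left
      rw [← hvalA, ← hvalU] at *
      exact h
    · rcases j' with j | d
      · right
        refine ⟨j, fun hc => hj' (Finset.mem_toLeft.1 hc), ?_⟩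
        rw [← hvalA, ← hvalU]
        exact hineq
      · left
        rw [← hvalA, ← hvalU]
        have hz : v' i (Sum.inr d) = 0 := rfl
        rw [hz, add_zero] at hineq
        exact hineq
end

section
/- For every n ≥ 1, consider the chores instance with n agents and n+1 items in which every agent values every item at −1. Then for every agent i the truncated proportional share for chores satisfies TPS_i = −(n+1)/n, and in every allocation some agent i receives value v_i(A_i) ≤ −2 (that is, her cost is at least a factor 2 − 2/(n+1) times her TPS cost). -/
open Finset

/-- The truncated proportional share for chores:
`TPS_i = min(PS_i, min_{j ∈ M} v_i(j))`. -/
noncomputable def choresTPS {ι : Type*} [Fintype ι] (n : ℕ)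
    (hne : (Finset.univ : Finset ι).Nonempty) (v : ι → ℝ) : ℝ :=
  min (val v Finset.univ / n) (Finset.univ.inf' hne v)

/-- in the chores instance with `n` agents and `n+1` chores each
valued at `−1`, every agent's chores TPS equals `−(n+1)/n`, and in every
allocation some agent receives value at most `−2` (so her cost is at least a
`2 − 2/(n+1)` factor times her TPS cost). -/
theorem stmt15 (n : ℕ) (hn : 1 ≤ n) :
    choresTPS (ι := Fin (n + 1)) n Finset.univ_nonempty (fun _ => (-1 : ℝ)) =
      -(((n : ℝ) + 1) / n) ∧
    (∀ A : Fin n → Finset (Fin (n + 1)), isAlloc A →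
      ∃ i, val (fun _ => (-1 : ℝ)) (A i) ≤ -2) := by
  have hn' : (1 : ℝ) ≤ (n : ℝ) := by exact_mod_cast hn
  have hnpos : (0 : ℝ) < n := by linarith
  constructor
  · have hval : val (fun _ => (-1 : ℝ)) (Finset.univ : Finset (Fin (n+1))) = -((n : ℝ) + 1) := by
      simp only [_root_.val, Finset.sum_const, Finset.card_univ, Fintype.card_fin,
        nsmul_eq_mul, mul_neg_one]
      push_cast
      ring
    have hinf : (Finset.univ : Finset (Fin (n+1))).inf' Finset.univ_nonempty (fun _ => (-1 : ℝ)) = -1 := by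
      simp
    rw [choresTPS, hval, hinf]
    rw [min_eq_left]
    · ring
    · rw [div_le_iff₀ hnpos]; linarith
  · intro A hA
    by_contra h
    push_neg at h
    have hcard : ∀ i, (A i).card ≤ 1 := by
      intro i
      have := h i
      simp only [_root_.val, Finset.sum_const, nsmul_eq_mul, mul_neg_one] at this
      by_contra hc
      push_neg at hc
      have : (2 : ℝ) ≤ (A i).card := by exact_mod_cast hc
      linarith
    have hsum : (Finset.univ.biUnion A).card ≤ ∑ i : Fin n, (A i).card :=
      Finset.card_biUnion_le
    rw [hA.2] at hsum
    simp only [Finset.card_univ, Fintype.card_fin] at hsum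
    have : ∑ i : Fin n, (A i).card ≤ n := by
      calc ∑ i : Fin n, (A i).card ≤ ∑ _i : Fin n, 1 := Finset.sum_le_sum (fun i _ => hcard i)
        _ = n := by simp
    omega
end

section
/- Let k ≥ 2 and n = k². Consider the instance with n agents and n items (indexed 1,…,n) in which: for each agent i with 1 ≤ i ≤ k, v_i(j) = k if j ≡ i (mod k) and v_i(j) = 0 otherwise; and for each agent i with k < i ≤ n, v_i(j) = 1 for every item j. Then: (a) v_i(M) = n for every agent i (valuations are normalized) and TPS_i = 1 for every agent i with k < i ≤ n; (b) every allocation in which each agent i with k < i ≤ n receives strictly positive value has utilitarian social welfare Σ_i v_i(A_i) at most 2n − k < 2n; and (c) there exists an allocation with utilitarian social welfare n·k = n^{3/2}. -/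
open Finset

lemma card_filter_fin (n : ℕ) (p : ℕ → Prop) [DecidablePred p] :
    ((Finset.univ : Finset (Fin n)).filter (fun i : Fin n => p i.val)).card
      = ((Finset.range n).filter p).card := by
  rw [Finset.card_filter, Finset.card_filter,
    Fin.sum_univ_eq_sum_range (fun m => if p m then 1 else 0)]

lemma card_range_filter_lt (k n : ℕ) (h : k ≤ n) :
    ((Finset.range n).filter (fun x => x < k)).card = k := by
  have : (Finset.range n).filter (fun x => x < k) = Finset.range k := by
    ext x; simp only [mem_filter, mem_range]; omega
  rw [this, card_range]

lemma card_range_filter_not_lt (k n : ℕ) :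
    ((Finset.range n).filter (fun x => ¬ x < k)).card = n - k := by
  have : (Finset.range n).filter (fun x => ¬ x < k) = Finset.Ico k n := by
    ext x; simp only [mem_filter, mem_range, Finset.mem_Ico]; omega
  rw [this, Nat.card_Ico]

lemma card_range_filter_mod (k r : ℕ) (hk : 0 < k) (hr : r < k) :
    ((Finset.range (k ^ 2)).filter (fun x => x % k = r)).card = k := by
  have himg : (Finset.range (k ^ 2)).filter (fun x => x % k = r)
      = (Finset.range k).image (fun q => k * q + r) := by
    ext x
    simp only [mem_filter, mem_range, mem_image]
    constructor
    · rintro ⟨hx, hmod⟩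
      refine ⟨x / k, ?_, ?_⟩
      · have hx' : x < k * k := by rw [pow_two] at hx; exact hx
        exact Nat.div_lt_of_lt_mul hx'
      · have := Nat.div_add_mod x k
        omega
    · rintro ⟨q, hq, rfl⟩
      refine ⟨?_, ?_⟩
      · have h1 : k * (q + 1) ≤ k * k := Nat.mul_le_mul_left k hq
        have h2 : k ^ 2 = k * k := pow_two k
        nlinarith
      · rw [Nat.mul_add_mod]; exact Nat.mod_eq_of_lt hr
  rw [himg, Finset.card_image_of_injective _
    (fun a b hab => Nat.eq_of_mul_eq_mul_left hk (Nat.add_right_cancel hab)), card_range]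


/-- with `n = k²` agents and `n` items, where the first `k` agents
value items in their residue class mod `k` at `k` (and other items at `0`), and
the remaining agents value every item at `1`:
(a) `v_i(M) = n` for every agent (valuations normalized) and `TPS_i = 1` for every
uniform agent; (b) every allocation giving each uniform agent positive value has
utilitarian welfare at most `2n − k`, which is less than `2n`; and (c) some
allocation has utilitarian welfare `n·k = n^{3/2}`. -/
theorem stmt16 (k : ℕ) (hk : 2 ≤ k)
    (v : Fin (k ^ 2) → Fin (k ^ 2) → ℝ)
    (hbig : ∀ i j : Fin (k ^ 2), (i : ℕ) < k →
      v i j = if (j : ℕ) % k = (i : ℕ) % k then (k : ℝ) else 0)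
    (hunif : ∀ i j : Fin (k ^ 2), k ≤ (i : ℕ) → v i j = 1) :
    (∀ i, val (v i) Finset.univ = ((k : ℝ) ^ 2)) ∧
    (∀ i : Fin (k ^ 2), k ≤ (i : ℕ) → isTPS (k ^ 2) Finset.univ (v i) 1) ∧
    (∀ A : Fin (k ^ 2) → Finset (Fin (k ^ 2)), isAlloc A →
      (∀ i : Fin (k ^ 2), k ≤ (i : ℕ) → 0 < val (v i) (A i)) →
      (∑ i, val (v i) (A i)) ≤ 2 * ((k : ℝ) ^ 2) - k) ∧
    (2 * ((k : ℝ) ^ 2) - k < 2 * ((k : ℝ) ^ 2)) ∧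
    (∃ A : Fin (k ^ 2) → Finset (Fin (k ^ 2)), isAlloc A ∧
      (∑ i, val (v i) (A i)) = ((k : ℝ) ^ 2) * k) := by
  classical
  have hk0 : 0 < k := by omega
  have hkn : k ≤ k ^ 2 := by nlinarith
  have hkR : (0:ℝ) < k := by exact_mod_cast hk0
  have hcardmod : ∀ r : ℕ, r < k →
      ((Finset.univ : Finset (Fin (k ^ 2))).filter (fun j : Fin (k ^ 2) => j.val % k = r)).card = k := by
    intro r hr
    rw [card_filter_fin (k ^ 2) (fun x => x % k = r), card_range_filter_mod k r hk0 hr]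
  -- (a) normalization
  have ha : ∀ i, val (v i) Finset.univ = ((k : ℝ) ^ 2) := by
    intro i
    show (∑ j, v i j) = ((k : ℝ) ^ 2)
    by_cases hi : (i : ℕ) < k
    · have hv : ∀ j, v i j = if (j : ℕ) % k = (i : ℕ) % k then (k : ℝ) else 0 :=
        fun j => hbig i j hi
      simp_rw [hv]
      rw [← Finset.sum_filter, Finset.sum_const,
        hcardmod ((i : ℕ) % k) (Nat.mod_lt _ hk0), nsmul_eq_mul]
      ring
    · have hv : ∀ j, v i j = 1 := fun j => hunif i j (le_of_not_gt hi)
      simp_rw [hv]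
      rw [Finset.sum_const, Finset.card_univ, Fintype.card_fin, nsmul_eq_mul]
      push_cast
      ring
  -- (a') TPS of uniform agents
  have htps : ∀ i : Fin (k ^ 2), k ≤ (i : ℕ) → isTPS (k ^ 2) Finset.univ (v i) 1 := by
    intro i hi
    have hv : ∀ j, v i j = 1 := fun j => hunif i j hi
    have hkk : ((k : ℝ) ^ 2) ≠ 0 := by positivity
    constructor
    · refine ⟨zero_le_one, ?_⟩
      simp_rw [hv, min_self]
      rw [Finset.sum_const, Finset.card_univ, Fintype.card_fin, nsmul_eq_mul]
      push_cast
      field_simp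
    · rintro t' ⟨ht0, hts⟩
      simp_rw [hv] at hts
      rw [Finset.sum_const, Finset.card_univ, Fintype.card_fin, nsmul_eq_mul] at hts
      push_cast at hts
      field_simp at hts
      linarith [min_le_left (1:ℝ) t', hts]
  -- (b) welfare upper bound
  have hb : ∀ A : Fin (k ^ 2) → Finset (Fin (k ^ 2)), isAlloc A →
      (∀ i : Fin (k ^ 2), k ≤ (i : ℕ) → 0 < val (v i) (A i)) →
      (∑ i, val (v i) (A i)) ≤ 2 * ((k : ℝ) ^ 2) - k := by
    rintro A ⟨hdisj, hcover⟩ hpos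
    have hval_unif : ∀ i : Fin (k ^ 2), k ≤ (i : ℕ) → val (v i) (A i) = ((A i).card : ℝ) := by
      intro i hi
      show (∑ j ∈ A i, v i j) = ((A i).card : ℝ)
      have hv : ∀ j, v i j = 1 := fun j => hunif i j hi
      simp_rw [hv]
      rw [Finset.sum_const, nsmul_eq_mul, mul_one]
    have hbound : ∀ i : Fin (k ^ 2),
        val (v i) (A i) ≤ if (i : ℕ) < k then (k : ℝ) * (A i).card else ((A i).card : ℝ) := by
      intro i
      by_cases hi : (i : ℕ) < k
      · simp only [hi, if_true]
        show (∑ j ∈ A i, v i j) ≤ (k : ℝ) * (A i).card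
        calc ∑ j ∈ A i, v i j ≤ ∑ _j ∈ A i, (k : ℝ) := by
              apply Finset.sum_le_sum
              intro j _
              rw [hbig i j hi]
              split_ifs
              · exact le_refl _
              · positivity
          _ = (A i).card * k := by rw [Finset.sum_const, nsmul_eq_mul]
          _ = (k : ℝ) * (A i).card := by ring
      · simp only [hi, if_false]
        exact le_of_eq (hval_unif i (le_of_not_gt hi))
    have hsum_card : ∑ i, ((A i).card : ℝ) = (k : ℝ) ^ 2 := by
      have h1 : (Finset.univ.biUnion A).card = ∑ i, (A i).card :=
        Finset.card_biUnion (fun i _ j _ hij => hdisj i j hij)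
      rw [hcover, Finset.card_univ, Fintype.card_fin] at h1
      have h2 := congrArg (fun m : ℕ => (m : ℝ)) h1
      push_cast at h2
      linarith [h2]
    have htot : ∑ i, val (v i) (A i)
        ≤ ∑ i : Fin (k ^ 2), (if (i : ℕ) < k then (k : ℝ) * (A i).card else ((A i).card : ℝ)) :=
      Finset.sum_le_sum (fun i _ => hbound i)
    have hsplit : ∑ i : Fin (k ^ 2), (if (i : ℕ) < k then (k : ℝ) * (A i).card else ((A i).card : ℝ))
        = (k : ℝ) * (∑ i ∈ Finset.univ.filter (fun i : Fin (k ^ 2) => (i : ℕ) < k), ((A i).card : ℝ))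
          + ∑ i ∈ Finset.univ.filter (fun i : Fin (k ^ 2) => ¬ (i : ℕ) < k), ((A i).card : ℝ) := by
      rw [Finset.sum_ite, Finset.mul_sum]
    have hsplit2 : (∑ i ∈ Finset.univ.filter (fun i : Fin (k ^ 2) => (i : ℕ) < k), ((A i).card : ℝ))
          + ∑ i ∈ Finset.univ.filter (fun i : Fin (k ^ 2) => ¬ (i : ℕ) < k), ((A i).card : ℝ)
        = ∑ i : Fin (k ^ 2), ((A i).card : ℝ) :=
      Finset.sum_filter_add_sum_filter_not _ _ _
    have hcardf : (Finset.univ.filter (fun i : Fin (k ^ 2) => ¬ (i : ℕ) < k)).card = k ^ 2 - k := by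
      rw [card_filter_fin (k ^ 2) (fun x => ¬ x < k), card_range_filter_not_lt]
    have hU : ((k : ℝ) ^ 2 - k)
        ≤ ∑ i ∈ Finset.univ.filter (fun i : Fin (k ^ 2) => ¬ (i : ℕ) < k), ((A i).card : ℝ) := by
      have h1 : ∀ i ∈ Finset.univ.filter (fun i : Fin (k ^ 2) => ¬ (i : ℕ) < k),
          (1 : ℝ) ≤ ((A i).card : ℝ) := by
        intro i hi
        simp only [Finset.mem_filter, Finset.mem_univ, true_and] at hi
        have hik : k ≤ (i : ℕ) := le_of_not_gt hi
        have hp := hpos i hik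
        rw [hval_unif i hik] at hp
        have h9 : 1 ≤ (A i).card := Nat.one_le_iff_ne_zero.mpr (by exact_mod_cast hp.ne')
        exact_mod_cast h9
      have h2 := Finset.card_nsmul_le_sum _ _ _ h1
      rw [hcardf] at h2
      have h3 : ((k ^ 2 - k : ℕ) : ℝ) = (k : ℝ) ^ 2 - k := by
        rw [Nat.cast_sub hkn]; push_cast; ring
      calc ((k : ℝ) ^ 2 - k) = ((k ^ 2 - k : ℕ) : ℝ) := h3.symm
        _ = (k ^ 2 - k : ℕ) • (1 : ℝ) := by simp
        _ ≤ _ := h2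
    rw [hsplit] at htot
    have hBU : (∑ i ∈ Finset.univ.filter (fun i : Fin (k ^ 2) => (i : ℕ) < k), ((A i).card : ℝ))
          + ∑ i ∈ Finset.univ.filter (fun i : Fin (k ^ 2) => ¬ (i : ℕ) < k), ((A i).card : ℝ)
        = (k : ℝ) ^ 2 := by rw [hsplit2, hsum_card]
    have hk2 : (2 : ℝ) ≤ (k : ℝ) := by exact_mod_cast hk
    nlinarith [htot, hBU, hU, mul_nonneg (by linarith : (0:ℝ) ≤ (k : ℝ) - 1)
      (by linarith [hU] : (0:ℝ) ≤ (∑ i ∈ Finset.univ.filter (fun i : Fin (k ^ 2) => ¬ (i : ℕ) < k), ((A i).card : ℝ)) - ((k : ℝ) ^ 2 - k))]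
  refine ⟨ha, htps, hb, by nlinarith, ?_⟩
  -- (c) good allocation
  set A : Fin (k ^ 2) → Finset (Fin (k ^ 2)) :=
    fun i => if (i : ℕ) < k then Finset.univ.filter (fun j : Fin (k ^ 2) => j.val % k = (i : ℕ)) else ∅
    with hA
  have hmemA : ∀ i j : Fin (k ^ 2), j ∈ A i ↔ ((i : ℕ) < k ∧ j.val % k = (i : ℕ)) := by
    intro i j
    rw [hA]
    by_cases hi : (i : ℕ) < k
    · simp [hi]
    · simp [hi]
  refine ⟨A, ⟨?_, ?_⟩, ?_⟩
  · intro i j hij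
    rw [Finset.disjoint_left]
    intro x hxi hxj
    rw [hmemA] at hxi hxj
    exact hij (Fin.ext (hxi.2.symm.trans hxj.2))
  · apply Finset.eq_univ_of_forall
    intro j
    rw [Finset.mem_biUnion]
    refine ⟨⟨j.val % k, lt_of_lt_of_le (Nat.mod_lt _ hk0) hkn⟩, Finset.mem_univ _, ?_⟩
    rw [hmemA]
    exact ⟨Nat.mod_lt _ hk0, rfl⟩
  · have hvalA : ∀ i : Fin (k ^ 2),
        val (v i) (A i) = if (i : ℕ) < k then ((k : ℝ) ^ 2) else 0 := by
      intro i
      by_cases hi : (i : ℕ) < k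
      · simp only [hi, if_true]
        show (∑ j ∈ A i, v i j) = ((k : ℝ) ^ 2)
        have hAi : A i = Finset.univ.filter (fun j : Fin (k ^ 2) => j.val % k = (i : ℕ)) := by
          rw [hA]; simp [hi]
        rw [hAi]
        have hone : ∀ j ∈ Finset.univ.filter (fun j : Fin (k ^ 2) => j.val % k = (i : ℕ)),
            v i j = (k : ℝ) := by
          intro j hj
          simp only [Finset.mem_filter] at hj
          rw [hbig i j hi, if_pos (by rw [hj.2, Nat.mod_eq_of_lt hi])]
        rw [Finset.sum_congr rfl hone, Finset.sum_const, hcardmod (i : ℕ) hi, nsmul_eq_mul]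
        ring
      · simp only [hi, if_false]
        have hAi : A i = ∅ := by rw [hA]; simp [hi]
        rw [hAi]
        show (∑ j ∈ (∅ : Finset (Fin (k ^ 2))), v i j) = 0
        exact Finset.sum_empty
    simp_rw [hvalA]
    rw [Finset.sum_ite, Finset.sum_const, Finset.sum_const, smul_zero, add_zero,
      card_filter_fin (k ^ 2) (fun x => x < k), card_range_filter_lt k (k ^ 2) hkn,
      nsmul_eq_mul]
    ring
end
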